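/- arXiv:2108.06564 — 8 statements merged into one kernel-verified Lean document; each statement's English description precedes it below -/
import Mathlib

section
/- Let ζ : [0,∞) → ℂ be continuous and f : [0,∞) → ℂ be continuous. Then the Volterra integral equation q(t) + ∫₀^t 𝓘(t−τ) ζ(τ) q(τ) dτ = f(t), for all t ≥ 0, admits a unique continuous solution q : [0,∞) → ℂ. -/
open MeasureTheory Set
open scoped Convolution

lemma gamma_step (a : ℝ) (ha : 0 ≤ a) : ∀ (k : ℕ) (x : ℝ), 0 < x → a ≤ x →
    a ^ k * Real.Gamma x ≤ Real.Gamma (x + k)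
  | 0, x, _, _ => by simp
  | (k+1), x, hx, hax => by
    have h1 := gamma_step a ha k x hx hax
    have hxk : (0:ℝ) < x + k := by positivity
    have h2 : Real.Gamma (x + (k+1) : ℝ) = (x + k) * Real.Gamma (x + k) := by
      have := Real.Gamma_add_one (s := x + k) hxk.ne'
      rw [← this]; push_cast; ring_nf
    have hc : x + ((k+1 : ℕ) : ℝ) = x + ((k:ℝ)+1) := by push_cast; ring
    rw [hc, h2]
    calc a ^ (k+1) * Real.Gamma x = a * (a ^ k * Real.Gamma x) := by ring
    _ ≤ a * Real.Gamma (x + k) := by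
        exact mul_le_mul_of_nonneg_left h1 ha
    _ ≤ (x + k) * Real.Gamma (x + k) := by
        have : a ≤ x + k := by linarith [Nat.cast_nonneg (α := ℝ) k]
        exact mul_le_mul_of_nonneg_right this (Real.Gamma_pos_of_pos hxk).le

lemma gamma_lb {A s : ℝ} (hA : 2 ≤ A) (hs : A ≤ s) :
    A ^ (s - A - 1) ≤ Real.Gamma (s + 1) := by
  set k : ℕ := ⌊s - A⌋₊ with hk
  have hsA : 0 ≤ s - A := by linarith
  have hk1 : (k : ℝ) ≤ s - A := Nat.floor_le hsA
  have hk2 : s - A < k + 1 := Nat.lt_floor_add_one _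
  have hx2 : (2:ℝ) ≤ s + 1 - k := by linarith
  have hxpos : (0:ℝ) < s + 1 - k := by linarith
  have h1 : Real.Gamma 2 ≤ Real.Gamma (s + 1 - k) :=
    Real.Gamma_strictMonoOn_Ici.monotoneOn (by norm_num) hx2 hx2
  rw [Real.Gamma_two] at h1
  have h2 := gamma_step A (by linarith) k (s + 1 - k) hxpos (by linarith)
  have h3 : s + 1 - k + k = s + 1 := by ring
  rw [h3] at h2
  have h4 : A ^ (s - A - 1) ≤ (A : ℝ) ^ (k : ℝ) := by
    apply Real.rpow_le_rpow_of_exponent_le (by linarith)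
    linarith
  rw [← Real.rpow_natCast A k] at h2
  nlinarith [Real.rpow_pos_of_pos (show (0:ℝ) < A by linarith) (k:ℝ),
    Real.rpow_pos_of_pos (show (0:ℝ) < A by linarith) (s - A - 1)]


lemma contOn_aux {c : ℝ} (hc : 0 < c) :
    ContinuousOn (fun s : ℝ => c ^ s / Real.Gamma (s + 1)) (Ici 0) := by
  intro s hs
  have hs' : (0:ℝ) < s + 1 := by simp at hs; linarith
  have h1 : ContinuousAt (fun s : ℝ => c ^ s) s := by
    have : (fun s : ℝ => c ^ s) = fun s => Real.exp (Real.log c * s) := by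
      funext x; rw [Real.rpow_def_of_pos hc]
    rw [this]; fun_prop
  have h2 : ContinuousAt (fun s : ℝ => Real.Gamma (s + 1)) s := by
    apply ContinuousAt.comp (g := Real.Gamma)
    · apply (Real.differentiableAt_Gamma _).continuousAt
      intro m
      have : (0:ℝ) ≤ m := Nat.cast_nonneg m
      intro h; rw [h] at hs'; linarith
    · fun_prop
  exact ((h1.div h2 (Real.Gamma_pos_of_pos hs').ne').continuousWithinAt)

lemma H1 {c : ℝ} (hc : 0 < c) :
    IntegrableOn (fun s : ℝ => c ^ s / Real.Gamma (s + 1)) (Ioi 0) := by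
  set A : ℝ := max 2 (2 * c) with hA
  have hA2 : (2:ℝ) ≤ A := le_max_left _ _
  have hAc : 2 * c ≤ A := le_max_right _ _
  have hA0 : (0:ℝ) < A := by linarith
  have hsplit : Ioc (0:ℝ) A ∪ Ioi A = Ioi 0 := Ioc_union_Ioi_eq_Ioi (by linarith)
  rw [← hsplit]
  apply IntegrableOn.union
  · exact ((contOn_aux hc).mono (Icc_subset_Ici_self)).integrableOn_Icc.mono_set
      Ioc_subset_Icc_self
  · -- tail
    have hmeas : AEStronglyMeasurable (fun s : ℝ => c ^ s / Real.Gamma (s + 1))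
        (volume.restrict (Ioi A)) := by
      apply ((contOn_aux hc).mono _).aestronglyMeasurable measurableSet_Ioi
      exact fun x hx => le_of_lt (show (0:ℝ) < x by simp at hx; linarith)
    apply Integrable.mono' (g := fun s => A ^ (A + 1) * Real.exp (- Real.log 2 * s))
      ((exp_neg_integrableOn_Ioi A (by positivity)).const_mul _) hmeas
    · filter_upwards [ae_restrict_mem measurableSet_Ioi] with s hs
      simp only [mem_Ioi] at hs
      have hs0 : (0:ℝ) < s := lt_of_le_of_lt hA0.le hs  -- A < s, A>0
      have hG := gamma_lb hA2 hs.le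
      have hGpos : (0:ℝ) < Real.Gamma (s + 1) := Real.Gamma_pos_of_pos (by linarith)
      have hApow : (0:ℝ) < A ^ (s - A - 1) := Real.rpow_pos_of_pos hA0 _
      have hnum : c ^ s ≤ (A / 2) ^ s := by
        apply Real.rpow_le_rpow hc.le (by linarith) hs0.le
      have key : c ^ s / Real.Gamma (s + 1) ≤ (A / 2) ^ s / A ^ (s - A - 1) := by
        exact div_le_div₀ (by positivity) hnum hApow hG
      have heq : (A / 2) ^ s / A ^ (s - A - 1) = A ^ (A + 1) * Real.exp (- Real.log 2 * s) := by
        have h2s : (0:ℝ) < (2:ℝ) ^ s := Real.rpow_pos_of_pos two_pos _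
        have hAs : (0:ℝ) < A ^ s := Real.rpow_pos_of_pos hA0 _
        have hAA1 : (0:ℝ) < A ^ (A + 1) := Real.rpow_pos_of_pos hA0 _
        rw [Real.div_rpow hA0.le (by norm_num), show s - A - 1 = s - (A + 1) by ring,
          Real.rpow_sub hA0,
          show -Real.log 2 * s = Real.log 2 * (-s) by ring,
          ← Real.rpow_def_of_pos two_pos, Real.rpow_neg (by norm_num : (0:ℝ) ≤ 2)]
        field_simp
      rw [Real.norm_eq_abs, abs_of_nonneg (by positivity)]
      rw [heq] at key; exact key


lemma contOn_aux' {c : ℝ} (hc : 0 < c) :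
    ContinuousOn (fun s : ℝ => c ^ s / Real.Gamma s) (Ioi 0) := by
  intro s hs
  simp only [mem_Ioi] at hs
  have h1 : ContinuousAt (fun s : ℝ => c ^ s) s := by
    have : (fun s : ℝ => c ^ s) = fun s => Real.exp (Real.log c * s) := by
      funext x; rw [Real.rpow_def_of_pos hc]
    rw [this]; fun_prop
  have h2 : ContinuousAt Real.Gamma s := by
    apply (Real.differentiableAt_Gamma _).continuousAt
    intro m h
    have : (0:ℝ) ≤ m := Nat.cast_nonneg m
    rw [h] at hs; linarith
  exact ((h1.div h2 (Real.Gamma_pos_of_pos hs).ne').continuousWithinAt)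

lemma H1' {c : ℝ} (hc : 0 < c) :
    IntegrableOn (fun s : ℝ => c ^ s / Real.Gamma s) (Ioi 0) := by
  have he : (0:ℝ) < c * Real.exp 1 := by positivity
  apply Integrable.mono' ((H1 he))
    (((contOn_aux' hc)).aestronglyMeasurable measurableSet_Ioi)
  filter_upwards [ae_restrict_mem measurableSet_Ioi] with s hs
  simp only [mem_Ioi] at hs
  have hG1 : (0:ℝ) < Real.Gamma (s + 1) := Real.Gamma_pos_of_pos (by linarith)
  have hGs : Real.Gamma (s + 1) = s * Real.Gamma s := Real.Gamma_add_one hs.ne'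
  have hGpos : (0:ℝ) < Real.Gamma s := Real.Gamma_pos_of_pos hs
  rw [Real.norm_eq_abs, abs_of_nonneg (by positivity)]
  have hse : s ≤ Real.exp s := by
    have := Real.add_one_le_exp s; linarith
  have hexp : Real.exp s = (Real.exp 1) ^ s := by
    rw [← Real.exp_one_rpow s]
  calc c ^ s / Real.Gamma s = c ^ s * s / Real.Gamma (s + 1) := by
        rw [hGs]; field_simp
  _ ≤ c ^ s * Real.exp s / Real.Gamma (s + 1) := by
        gcongr
  _ = (c * Real.exp 1) ^ s / Real.Gamma (s + 1) := by
        rw [Real.mul_rpow hc.le (Real.exp_pos 1).le, hexp]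

lemma integrand_int {t : ℝ} (ht : 0 < t) :
    IntegrableOn (fun s : ℝ => t ^ (s - 1) / Real.Gamma s) (Ioi 0) := by
  have h := (H1' ht).div_const t
  apply IntegrableOn.congr_fun h _ measurableSet_Ioi
  intro s _
  simp only []
  rw [Real.rpow_sub ht, Real.rpow_one]
  ring

/-- The Volterra function of order `-1`: `𝓘(t) = ∫₀^∞ t^(s-1)/Γ(s) ds`. -/
noncomputable def volterraI (t : ℝ) : ℝ :=
  ∫ s in Set.Ioi (0 : ℝ), t ^ (s - 1) / Real.Gamma s

lemma volterraI_nonneg {t : ℝ} (ht : 0 ≤ t) : 0 ≤ volterraI t := by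
  apply setIntegral_nonneg measurableSet_Ioi
  intro s hs
  simp only [mem_Ioi] at hs
  exact div_nonneg (Real.rpow_nonneg ht _) (Real.Gamma_pos_of_pos hs).le




lemma integrand_contOn {t : ℝ} (ht : 0 < t) :
    ContinuousOn (fun s : ℝ => t ^ (s - 1) / Real.Gamma s) (Ioi 0) := by
  intro s hs
  simp only [mem_Ioi] at hs
  have h1 : ContinuousAt (fun s : ℝ => t ^ (s - 1)) s := by
    have : (fun s : ℝ => t ^ (s - 1)) = fun s => Real.exp (Real.log t * (s - 1)) := by
      funext x; rw [Real.rpow_def_of_pos ht]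
    rw [this]; fun_prop
  have h2 : ContinuousAt Real.Gamma s := by
    apply (Real.differentiableAt_Gamma _).continuousAt
    intro m h
    have : (0:ℝ) ≤ m := Nat.cast_nonneg m
    rw [h] at hs; linarith
  exact ((h1.div h2 (Real.Gamma_pos_of_pos hs).ne').continuousWithinAt)

lemma volterraI_contOn : ContinuousOn volterraI (Ioi 0) := by
  intro t₀ ht₀
  simp only [mem_Ioi] at ht₀
  apply ContinuousAt.continuousWithinAt
  have hmem : Ioo (t₀/2) (t₀*2+1) ∈ nhds t₀ := by
    apply Ioo_mem_nhds <;> linarith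
  apply continuousAt_of_dominated
    (bound := fun s => (t₀/2) ^ (s-1) / Real.Gamma s + (t₀*2+1) ^ (s-1) / Real.Gamma s)
  · filter_upwards [hmem] with t ht
    exact (integrand_contOn (by simp at ht; linarith [ht.1])).aestronglyMeasurable
      measurableSet_Ioi
  · filter_upwards [hmem] with t ht
    filter_upwards [ae_restrict_mem measurableSet_Ioi] with s hs
    simp only [mem_Ioo] at ht
    simp only [mem_Ioi] at hs
    have ht0 : 0 < t := by linarith [ht.1]
    have hGpos : (0:ℝ) < Real.Gamma s := Real.Gamma_pos_of_pos hs
    rw [Real.norm_eq_abs, abs_of_nonneg (by positivity)]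
    have hnum : t ^ (s-1) ≤ (t₀/2) ^ (s-1) + (t₀*2+1) ^ (s-1) := by
      rcases le_or_gt 0 (s-1) with h1 | h1
      · have : t ^ (s-1) ≤ (t₀*2+1) ^ (s-1) :=
          Real.rpow_le_rpow ht0.le (by linarith [ht.2]) h1
        have h2 : (0:ℝ) ≤ (t₀/2) ^ (s-1) := Real.rpow_nonneg (by linarith) _
        linarith
      · have : t ^ (s-1) ≤ (t₀/2) ^ (s-1) := by
          apply Real.rpow_le_rpow_of_nonpos (by linarith) (le_of_lt ht.1) h1.le
        have h2 : (0:ℝ) ≤ (t₀*2+1) ^ (s-1) := Real.rpow_nonneg (by linarith) _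
        linarith
    rw [← add_div]
    exact div_le_div₀ (by
      have h2 : (0:ℝ) ≤ (t₀/2) ^ (s-1) := Real.rpow_nonneg (by linarith) _
      have h3 : (0:ℝ) ≤ (t₀*2+1) ^ (s-1) := Real.rpow_nonneg (by linarith) _
      linarith) hnum hGpos le_rfl
  · exact (integrand_int (by linarith : (0:ℝ) < t₀/2)).add
      (integrand_int (by linarith : (0:ℝ) < t₀*2+1))
  · filter_upwards [ae_restrict_mem measurableSet_Ioi] with s hs
    simp only [mem_Ioi] at hs
    apply ContinuousAt.div_const
    exact Real.continuousAt_rpow_const t₀ (s-1) (Or.inl ht₀.ne')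




lemma volterraI_integrableOn (T : ℝ) : IntegrableOn volterraI (Ioc 0 T) := by
  rcases le_or_gt T 0 with hT | hT
  · rw [Ioc_eq_empty (by intro h; linarith)]; exact integrableOn_empty
  have hF : ∀ p : ℝ × ℝ, (fun p : ℝ × ℝ => p.1 ^ (p.2 - 1) / Real.Gamma p.2) p
      = p.1 ^ (p.2 - 1) / Real.Gamma p.2 := fun _ => rfl
  have hFm : AEStronglyMeasurable (fun p : ℝ × ℝ => p.1 ^ (p.2 - 1) / Real.Gamma p.2) ((volume.restrict (Ioc (0:ℝ) T)).prod (volume.restrict (Ioi (0:ℝ)))) := by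
    have hopen : IsOpen (Ioi (0:ℝ) ×ˢ Ioi (0:ℝ)) := isOpen_Ioi.prod isOpen_Ioi
    have hcont : ContinuousOn (fun p : ℝ × ℝ => p.1 ^ (p.2 - 1) / Real.Gamma p.2) (Ioi 0 ×ˢ Ioi 0) := by
      intro p hp
      obtain ⟨hp1, hp2⟩ := hp
      simp only [mem_Ioi] at hp1 hp2
      apply ContinuousAt.continuousWithinAt
      have h1 : ContinuousAt (fun p : ℝ × ℝ => p.1 ^ (p.2 - 1)) p := by
        have h := Real.continuousAt_rpow (p.1, p.2 - 1) (Or.inl (ne_of_gt hp1))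
        have hin : ContinuousAt (fun q : ℝ × ℝ => (q.1, q.2 - 1)) p := by fun_prop
        exact (ContinuousAt.comp (f := fun q : ℝ × ℝ => (q.1, q.2 - 1)) h hin :)
      have h2 : ContinuousAt (fun p : ℝ × ℝ => Real.Gamma p.2) p := by
        apply ContinuousAt.comp (g := Real.Gamma)
        · apply (Real.differentiableAt_Gamma _).continuousAt
          intro m h
          have : (0:ℝ) ≤ m := Nat.cast_nonneg m
          rw [h] at hp2; linarith
        · fun_prop
      exact h1.div h2 (Real.Gamma_pos_of_pos hp2).ne'
    have hm1 : AEStronglyMeasurable (fun p : ℝ × ℝ => p.1 ^ (p.2 - 1) / Real.Gamma p.2) ((volume.prod volume).restrict (Ioi 0 ×ˢ Ioi 0)) :=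
      hcont.aestronglyMeasurable hopen.measurableSet
    have hprodeq : (volume.restrict (Ioc (0:ℝ) T)).prod (volume.restrict (Ioi (0:ℝ))) = (volume.prod volume).restrict (Ioc 0 T ×ˢ Ioi 0) :=
      Measure.prod_restrict _ _
    rw [hprodeq]
    exact hm1.mono_measure (Measure.restrict_mono
      (prod_mono Ioc_subset_Ioi_self subset_rfl) le_rfl)
  have key : Integrable (fun p : ℝ × ℝ => p.1 ^ (p.2 - 1) / Real.Gamma p.2) ((volume.restrict (Ioc (0:ℝ) T)).prod (volume.restrict (Ioi (0:ℝ)))) := by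
    rw [integrable_prod_iff' hFm]
    constructor
    · filter_upwards [ae_restrict_mem measurableSet_Ioi] with s hs
      simp only [mem_Ioi] at hs
      show IntegrableOn (fun u : ℝ => u ^ (s-1) / Real.Gamma s) (Ioc 0 T) volume
      have h1 : IntervalIntegrable (fun u : ℝ => u ^ (s-1)) volume 0 T :=
        intervalIntegral.intervalIntegrable_rpow' (by linarith)
      have h2 : IntegrableOn (fun u : ℝ => u ^ (s-1)) (Ioc 0 T) := by
        rwa [intervalIntegrable_iff_integrableOn_Ioc_of_le hT.le] at h1
      exact h2.div_const _
    · apply Integrable.congr (H1 hT)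
      filter_upwards [ae_restrict_mem measurableSet_Ioi] with s hs
      simp only [mem_Ioi] at hs
      have hGpos : (0:ℝ) < Real.Gamma s := Real.Gamma_pos_of_pos hs
      have e1 : (∫ u in Ioc (0:ℝ) T, ‖u ^ (s-1) / Real.Gamma s‖)
          = ∫ u in Ioc (0:ℝ) T, u ^ (s-1) / Real.Gamma s := by
        apply setIntegral_congr_fun measurableSet_Ioc
        intro u hu
        simp only [Real.norm_eq_abs]
        exact abs_of_nonneg (div_nonneg (Real.rpow_nonneg hu.1.le _) hGpos.le)
      have e3 : ∫ u in Ioc (0:ℝ) T, u ^ (s-1) = T ^ s / s := by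
        rw [← intervalIntegral.integral_of_le hT.le,
          integral_rpow (Or.inl (by linarith))]
        rw [show s - 1 + 1 = s by ring, Real.zero_rpow (by linarith : s ≠ 0)]
        ring
      show _ = ∫ u in Ioc (0:ℝ) T, ‖u ^ (s-1) / Real.Gamma s‖
      rw [e1, integral_div, e3, Real.Gamma_add_one (by linarith : s ≠ 0), div_div]
  exact key.integral_prod_left



lemma Kexp_int (lam t : ℝ) :
    IntegrableOn (fun u => volterraI u * Real.exp (-lam * u)) (Ioc 0 t) := by
  apply Integrable.mono' (((volterraI_integrableOn t).norm.mul_const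
    (max 1 (Real.exp (-lam * t)))))
  · exact (volterraI_integrableOn t).aestronglyMeasurable.mul
      (Continuous.aestronglyMeasurable (by fun_prop))
  · filter_upwards [ae_restrict_mem measurableSet_Ioc] with u hu
    obtain ⟨hu0, hut⟩ := hu
    have he : Real.exp (-lam * u) ≤ max 1 (Real.exp (-lam * t)) := by
      rcases le_or_gt 0 lam with h | h
      · exact le_max_of_le_left (Real.exp_le_one_iff.mpr (by nlinarith))
      · exact le_max_of_le_right (Real.exp_le_exp.mpr (by nlinarith))
    rw [Real.norm_eq_abs, abs_mul, abs_of_nonneg (Real.exp_pos _).le]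
    exact mul_le_mul_of_nonneg_left he (abs_nonneg _)

lemma Kexp_refl_int {lam t : ℝ} (ht : 0 ≤ t) :
    IntegrableOn (fun τ => volterraI (t - τ) * Real.exp (lam * τ)) (Ioc 0 t) := by
  have h1 := Kexp_int lam t
  have h2 : IntervalIntegrable (fun u => volterraI u * Real.exp (-lam * u)) volume 0 t :=
    (intervalIntegrable_iff_integrableOn_Ioc_of_le ht).mpr h1
  have h3 := (h2.comp_sub_left t).symm
  rw [sub_zero, sub_self] at h3
  have h4 : IntegrableOn (fun τ => volterraI (t - τ) * Real.exp (-lam * (t - τ)))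
      (Ioc 0 t) := (intervalIntegrable_iff_integrableOn_Ioc_of_le ht).mp h3
  have h5 := h4.mul_const (Real.exp (lam * t))
  apply IntegrableOn.congr_fun h5 _ measurableSet_Ioc
  intro τ _
  simp only []
  rw [mul_assoc, ← Real.exp_add]
  ring_nf

lemma bound_of_contOn {g : ℝ → ℂ} (hg : ContinuousOn g (Ici 0)) (t : ℝ) :
    ∃ C : ℝ, 0 ≤ C ∧ ∀ τ ∈ Icc (0:ℝ) t, ‖g τ‖ ≤ C := by
  rcases le_or_gt t 0 with h | h
  · rcases le_or_gt 0 t with h0 | h0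
    · have : t = 0 := le_antisymm h h0
      subst this
      exact ⟨‖g 0‖, norm_nonneg _, fun τ hτ => by
        have : τ = 0 := le_antisymm hτ.2 hτ.1; subst this; exact le_rfl⟩
    · exact ⟨0, le_rfl, fun τ hτ => absurd (hτ.1.trans hτ.2) (not_le.mpr h0)⟩
  · obtain ⟨C, hC⟩ := isCompact_Icc.exists_bound_of_continuousOn
      (hg.mono Icc_subset_Ici_self)
    exact ⟨C, le_trans (norm_nonneg (g 0)) (hC 0 ⟨le_rfl, h.le⟩), hC⟩

lemma prod_aesm {g : ℝ → ℂ} (hg : ContinuousOn g (Ici 0)) {t : ℝ} (ht : 0 ≤ t) :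
    AEStronglyMeasurable (fun τ => (volterraI (t - τ) : ℂ) * g τ)
      (volume.restrict (Ioc 0 t)) := by
  rw [← Measure.restrict_congr_set Ioo_ae_eq_Ioc]
  apply ContinuousOn.aestronglyMeasurable _ measurableSet_Ioo
  apply ContinuousOn.mul
  · apply Continuous.comp_continuousOn Complex.continuous_ofReal
    apply volterraI_contOn.comp (by fun_prop : Continuous fun τ : ℝ => t - τ).continuousOn
    intro τ hτ
    simp only [mem_Ioo] at hτ
    simp only [mem_Ioi]
    show (0:ℝ) < t - τ
    linarith [hτ.2]
  · exact hg.mono (fun τ hτ => le_of_lt hτ.1)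

lemma Vint {g : ℝ → ℂ} (hg : ContinuousOn g (Ici 0)) {t : ℝ} (ht : 0 ≤ t) :
    IntegrableOn (fun τ => (volterraI (t - τ) : ℂ) * g τ) (Ioc 0 t) := by
  obtain ⟨C, hC0, hC⟩ := bound_of_contOn hg t
  apply Integrable.mono' (((Kexp_refl_int (lam := 0) ht).norm.mul_const C)) (prod_aesm hg ht)
  filter_upwards [ae_restrict_mem measurableSet_Ioc] with τ hτ
  obtain ⟨hτ0, hτt⟩ := hτ
  have hK : 0 ≤ volterraI (t - τ) := volterraI_nonneg (by linarith)
  have hR : ‖volterraI (t - τ) * Real.exp (0 * τ)‖ = |volterraI (t - τ)| := by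
    simp [Real.norm_eq_abs, abs_mul]
  rw [norm_mul, Complex.norm_real, Real.norm_eq_abs, hR]
  exact mul_le_mul_of_nonneg_left (hC τ ⟨hτ0.le, hτt⟩) (abs_nonneg _)

lemma Vint3 {ζ g : ℝ → ℂ} (hζ : ContinuousOn ζ (Ici 0)) (hg : ContinuousOn g (Ici 0))
    {t : ℝ} (ht : 0 ≤ t) :
    IntegrableOn (fun τ => (volterraI (t - τ) : ℂ) * ζ τ * g τ) (Ioc 0 t) := by
  have h := Vint (hζ.mul hg) ht
  apply IntegrableOn.congr_fun h _ measurableSet_Ioc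
  intro τ _
  simp only [Pi.mul_apply]
  ring



lemma Kexp_nonneg_ae (lam t : ℝ) :
    0 ≤ᵐ[volume.restrict (Ioc 0 t)] fun u => volterraI u * Real.exp (-lam * u) := by
  filter_upwards [ae_restrict_mem measurableSet_Ioc] with u hu
  exact mul_nonneg (volterraI_nonneg hu.1.le) (Real.exp_pos _).le

/-- Substitution: `∫_{(0,t]} K(t-τ) e^{λτ} dτ = e^{λt} ∫_{(0,t]} K(u) e^{-λu} du`. -/
lemma refl_integral_eq {lam t : ℝ} (ht : 0 ≤ t) :
    ∫ τ in Ioc (0:ℝ) t, volterraI (t - τ) * Real.exp (lam * τ)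
      = Real.exp (lam * t) * ∫ u in Ioc (0:ℝ) t, volterraI u * Real.exp (-lam * u) := by
  have h0 := intervalIntegral.integral_comp_sub_left
    (a := 0) (b := t) (fun u => volterraI u * Real.exp (lam * (t - u))) t
  rw [sub_zero, sub_self] at h0
  have h1 : (∫ τ in (0:ℝ)..t, volterraI (t - τ) * Real.exp (lam * τ))
      = ∫ u in (0:ℝ)..t, volterraI u * Real.exp (lam * (t - u)) := by
    rw [← h0]
    apply intervalIntegral.integral_congr
    intro τ _
    simp only []
    rw [sub_sub_cancel]
  rw [← intervalIntegral.integral_of_le ht, h1, intervalIntegral.integral_of_le ht,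
    ← integral_const_mul]
  apply setIntegral_congr_fun measurableSet_Ioc
  intro u _
  simp only []
  rw [show lam * (t - u) = lam * t + (-lam * u) by ring, Real.exp_add]
  ring

/-- The key estimate for the Volterra operator. -/
lemma Vbound {ζ g : ℝ → ℂ} (hζ : ContinuousOn ζ (Ici 0)) (hg : ContinuousOn g (Ici 0))
    {T t M C lam : ℝ} (ht0 : 0 ≤ t) (htT : t ≤ T)
    (hM : ∀ τ ∈ Icc (0:ℝ) T, ‖ζ τ‖ ≤ M) (hC : 0 ≤ C)
    (hgB : ∀ τ ∈ Icc (0:ℝ) T, ‖g τ‖ ≤ C * Real.exp (lam * τ)) :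
    ‖∫ τ in (0:ℝ)..t, (volterraI (t - τ) : ℂ) * ζ τ * g τ‖
      ≤ C * Real.exp (lam * t) *
        (M * ∫ u in Ioc (0:ℝ) T, volterraI u * Real.exp (-lam * u)) := by
  have hM0 : 0 ≤ M := le_trans (norm_nonneg (ζ 0)) (hM 0 ⟨le_rfl, le_trans ht0 htT⟩)
  rw [intervalIntegral.integral_of_le ht0]
  calc ‖∫ τ in Ioc (0:ℝ) t, (volterraI (t - τ) : ℂ) * ζ τ * g τ‖
      ≤ ∫ τ in Ioc (0:ℝ) t, ‖(volterraI (t - τ) : ℂ) * ζ τ * g τ‖ :=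
        norm_integral_le_integral_norm _
  _ ≤ ∫ τ in Ioc (0:ℝ) t, volterraI (t - τ) * Real.exp (lam * τ) * (M * C) := by
      apply setIntegral_mono_on
      · apply Integrable.norm
        have h := Vint (hζ.mul hg) ht0
        apply IntegrableOn.congr_fun h _ measurableSet_Ioc
        intro τ _; simp only [Pi.mul_apply]; ring
      · exact (Kexp_refl_int ht0).mul_const _
      · exact measurableSet_Ioc
      · intro τ hτ
        obtain ⟨hτ0, hτt⟩ := hτ
        have hK : 0 ≤ volterraI (t - τ) := volterraI_nonneg (by linarith)
        rw [norm_mul, norm_mul, Complex.norm_real, Real.norm_eq_abs, abs_of_nonneg hK]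
        have h1 : ‖ζ τ‖ ≤ M := hM τ ⟨hτ0.le, le_trans hτt htT⟩
        have h2 : ‖g τ‖ ≤ C * Real.exp (lam * τ) := hgB τ ⟨hτ0.le, le_trans hτt htT⟩
        have := mul_le_mul h1 h2 (norm_nonneg _) hM0
        calc volterraI (t - τ) * ‖ζ τ‖ * ‖g τ‖
            = volterraI (t - τ) * (‖ζ τ‖ * ‖g τ‖) := by ring
        _ ≤ volterraI (t - τ) * (M * (C * Real.exp (lam * τ))) :=
            mul_le_mul_of_nonneg_left this hK
        _ = volterraI (t - τ) * Real.exp (lam * τ) * (M * C) := by ring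
  _ = (∫ τ in Ioc (0:ℝ) t, volterraI (t - τ) * Real.exp (lam * τ)) * (M * C) :=
        integral_mul_const _ _
  _ = Real.exp (lam * t) * (∫ u in Ioc (0:ℝ) t, volterraI u * Real.exp (-lam * u)) * (M * C) := by
        rw [refl_integral_eq ht0]
  _ ≤ Real.exp (lam * t) * (∫ u in Ioc (0:ℝ) T, volterraI u * Real.exp (-lam * u)) * (M * C) := by
        apply mul_le_mul_of_nonneg_right _ (by positivity)
        apply mul_le_mul_of_nonneg_left _ (Real.exp_pos _).le
        apply setIntegral_mono_set (Kexp_int lam T) (Kexp_nonneg_ae lam T)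
        exact HasSubset.Subset.eventuallyLE (Ioc_subset_Ioc_right htT)
  _ = C * Real.exp (lam * t) * (M * ∫ u in Ioc (0:ℝ) T, volterraI u * Real.exp (-lam * u)) := by
        ring

lemma decay (T M : ℝ) (hM : 0 ≤ M) : ∃ n : ℕ,
    M * ∫ u in Ioc (0:ℝ) T, volterraI u * Real.exp (-(n:ℝ) * u) ≤ 1/2 := by
  have htend : Filter.Tendsto
      (fun n : ℕ => ∫ u in Ioc (0:ℝ) T, volterraI u * Real.exp (-(n:ℝ) * u))
      Filter.atTop (nhds 0) := by
    have h := tendsto_integral_of_dominated_convergence (μ := volume.restrict (Ioc 0 T))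
      (F := fun (n : ℕ) u => volterraI u * Real.exp (-(n:ℝ) * u))
      (f := fun _ => (0:ℝ)) (bound := fun u => |volterraI u|)
      (fun n => (Kexp_int _ _).aestronglyMeasurable)
      ((volterraI_integrableOn T).norm)
      (fun n => by
        filter_upwards [ae_restrict_mem measurableSet_Ioc] with u hu
        rw [Real.norm_eq_abs, abs_mul, abs_of_nonneg (Real.exp_pos _).le]
        have : Real.exp (-(n:ℝ) * u) ≤ 1 :=
          Real.exp_le_one_iff.mpr (by nlinarith [hu.1, Nat.cast_nonneg (α := ℝ) n])
        nlinarith [abs_nonneg (volterraI u)])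
      (by
        filter_upwards [ae_restrict_mem measurableSet_Ioc] with u hu
        have h1 : Filter.Tendsto (fun n : ℕ => -(n:ℝ) * u) Filter.atTop Filter.atBot := by
          have h2 : Filter.Tendsto (fun n : ℕ => (n:ℝ)) Filter.atTop Filter.atTop :=
            tendsto_natCast_atTop_atTop
          have h3 := Filter.Tendsto.atTop_mul_const hu.1 h2
          -- (fun n => (n:ℝ) * u) → atTop
          have h4 := Filter.tendsto_neg_atTop_atBot.comp h3
          apply h4.congr; intro n; simp [Function.comp]
        have h5 := (Real.tendsto_exp_atBot).comp h1
        have h6 := h5.const_mul (volterraI u)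
        simpa using h6)
    simpa using h
  have h2 := htend.const_mul M
  rw [mul_zero] at h2
  have h3 := Filter.Tendsto.eventually_le_const (show (0:ℝ) < 1/2 by norm_num) h2
  obtain ⟨n, hn⟩ := h3.exists
  exact ⟨n, hn⟩



lemma glue_cont {F : ℝ → ℂ} (h : ∀ T : ℝ, 0 < T → ContinuousOn F (Icc 0 T)) :
    ContinuousOn F (Ici 0) := by
  intro t ht
  simp only [mem_Ici] at ht
  have h1 := (h (t+1) (by linarith)) t ⟨ht, by linarith⟩
  apply h1.mono_of_mem_nhdsWithin
  have h2 := inter_mem_nhdsWithin (Ici (0:ℝ)) (Iio_mem_nhds (show t < t + 1 by linarith))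
  exact Filter.mem_of_superset h2 (fun x hx => ⟨hx.1, le_of_lt hx.2⟩)

lemma Vcont {ζ g : ℝ → ℂ} (hζ : ContinuousOn ζ (Ici 0)) (hg : ContinuousOn g (Ici 0)) :
    ContinuousOn (fun t => ∫ τ in (0:ℝ)..t, (volterraI (t - τ) : ℂ) * ζ τ * g τ) (Ici 0) := by
  apply glue_cont
  intro T hT
  set proj : ℝ → ℝ := fun x => min (max x 0) T with hproj
  have hproj_cont : Continuous proj := by fun_prop
  have hproj_mem : ∀ x, proj x ∈ Icc (0:ℝ) T := fun x =>
    ⟨le_min (le_max_right _ _) hT.le, min_le_right _ _⟩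
  set G : ℝ → ℂ := fun x => ζ (proj x) * g (proj x) with hG
  have hζg : ContinuousOn (fun y => ζ y * g y) (Ici 0) := hζ.mul hg
  have hGc : Continuous G :=
    hζg.comp_continuous hproj_cont (fun x => (hproj_mem x).1)
  obtain ⟨C, hC⟩ := isCompact_Icc.exists_bound_of_continuousOn
    (hζg.mono Icc_subset_Ici_self)
  have hGb : ∀ x, ‖G x‖ ≤ C := fun x => hC _ (hproj_mem x)
  set Kt : ℝ → ℝ := (Ioc (0:ℝ) T).indicator volterraI with hKt
  have hKint : Integrable Kt :=
    (integrable_indicator_iff measurableSet_Ioc).mpr (volterraI_integrableOn T)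
  have hconv : Continuous (Kt ⋆[ContinuousLinearMap.lsmul ℝ ℝ] G) := by
    apply BddAbove.continuous_convolution_right_of_integrable
    · exact ⟨C, by rintro y ⟨x, rfl⟩; exact hGb x⟩
    · exact hKint
    · exact hGc
  have hP : ContinuousOn (fun t => ∫ u in Ioc (0:ℝ) t, volterraI u) (Icc 0 T) :=
    intervalIntegral.continuousOn_primitive
      ((integrableOn_Icc_iff_integrableOn_Ioc).mpr (volterraI_integrableOn T))
  apply ContinuousOn.congr
    (f := fun t => (Kt ⋆[ContinuousLinearMap.lsmul ℝ ℝ] G) t -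
      ((∫ u in Ioc (0:ℝ) T, volterraI u) - ∫ u in Ioc (0:ℝ) t, volterraI u) • G 0)
    (hconv.continuousOn.sub ((continuousOn_const.sub hP).smul continuousOn_const))
  -- now the pointwise identity on Icc 0 T
  intro t htmem
  obtain ⟨ht0, htT⟩ := htmem
  -- integrability of u ↦ K u • G (t - u) on Ioc 0 T
  have hint : IntegrableOn (fun u => volterraI u • G (t - u)) (Ioc 0 T) := by
    apply Integrable.mono' ((volterraI_integrableOn T).norm.mul_const C)
    · exact (volterraI_integrableOn T).aestronglyMeasurable.smul
        ((hGc.comp (by fun_prop : Continuous fun u : ℝ => t - u)).aestronglyMeasurable)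
    · filter_upwards [ae_restrict_mem measurableSet_Ioc] with u hu
      rw [norm_smul, Real.norm_eq_abs]
      exact mul_le_mul_of_nonneg_left (hGb _) (abs_nonneg _)
  -- conv t = ∫_{Ioc 0 T} K u • G (t-u)
  have hconv_eq : (Kt ⋆[ContinuousLinearMap.lsmul ℝ ℝ] G) t
      = ∫ u in Ioc (0:ℝ) T, volterraI u • G (t - u) := by
    rw [← integral_indicator measurableSet_Ioc]
    apply integral_congr_ae
    filter_upwards [] with u
    by_cases hu : u ∈ Ioc (0:ℝ) T
    · simp [hKt, Set.indicator_of_mem hu, ContinuousLinearMap.lsmul_apply]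
    · simp [hKt, Set.indicator_of_notMem hu, ContinuousLinearMap.lsmul_apply]
  -- split
  have hsplit : ∫ u in Ioc (0:ℝ) T, volterraI u • G (t - u)
      = (∫ u in Ioc (0:ℝ) t, volterraI u • G (t - u))
        + ∫ u in Ioc t T, volterraI u • G (t - u) := by
    rw [← Ioc_union_Ioc_eq_Ioc ht0 htT]
    exact setIntegral_union (Set.Ioc_disjoint_Ioc_of_le le_rfl) measurableSet_Ioc
      (hint.mono_set (Ioc_subset_Ioc_right htT)) (hint.mono_set (Ioc_subset_Ioc_left ht0))
  -- second piece is constant G 0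
  have hsecond : ∫ u in Ioc t T, volterraI u • G (t - u)
      = (∫ u in Ioc t T, volterraI u) • G 0 := by
    rw [← integral_smul_const]
    apply setIntegral_congr_fun measurableSet_Ioc
    intro u hu
    have : proj (t - u) = 0 := by
      simp only [hproj]
      rw [max_eq_right (by linarith [hu.1]), min_eq_left hT.le]
    simp only [hG, this]
    rw [show proj 0 = 0 by simp [hproj, hT.le]]
  have hPsplit : (∫ u in Ioc (0:ℝ) T, volterraI u)
      = (∫ u in Ioc (0:ℝ) t, volterraI u) + ∫ u in Ioc t T, volterraI u := by
    rw [← Ioc_union_Ioc_eq_Ioc ht0 htT]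
    exact setIntegral_union (Set.Ioc_disjoint_Ioc_of_le le_rfl) measurableSet_Ioc
      ((volterraI_integrableOn T).mono_set (Ioc_subset_Ioc_right htT))
      ((volterraI_integrableOn T).mono_set (Ioc_subset_Ioc_left ht0))
  -- first piece equals the Volterra integral
  have hfirst : (∫ τ in (0:ℝ)..t, (volterraI (t - τ) : ℂ) * ζ τ * g τ)
      = ∫ u in Ioc (0:ℝ) t, volterraI u • G (t - u) := by
    have e1 : (∫ τ in (0:ℝ)..t, (volterraI (t - τ) : ℂ) * ζ τ * g τ)
        = ∫ τ in (0:ℝ)..t, (fun u => volterraI u • G (t - u)) (t - τ) := by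
      apply intervalIntegral.integral_congr
      intro τ hτ
      rw [uIcc_of_le ht0] at hτ
      simp only [sub_sub_cancel]
      have hpτ : proj τ = τ := by
        simp only [hproj]
        rw [max_eq_left hτ.1, min_eq_left (le_trans hτ.2 htT)]
      simp only [hG, hpτ]
      rw [Complex.real_smul]
      ring
    rw [e1, intervalIntegral.integral_comp_sub_left (fun u => volterraI u • G (t - u)) t,
      sub_zero, sub_self, intervalIntegral.integral_of_le ht0]
  show (∫ τ in (0:ℝ)..t, (volterraI (t - τ) : ℂ) * ζ τ * g τ)
      = (Kt ⋆[ContinuousLinearMap.lsmul ℝ ℝ] G) t -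
        ((∫ u in Ioc (0:ℝ) T, volterraI u) - ∫ u in Ioc (0:ℝ) t, volterraI u) • G 0
  rw [hfirst, hconv_eq, hsplit, hsecond, hPsplit, add_sub_cancel_left, add_sub_cancel_right]



/-- The Volterra integral equation `q(t) + ∫₀^t 𝓘(t-τ) ζ(τ) q(τ) dτ = f(t)` with continuous
data `ζ`, `f` on `[0,∞)` admits a unique continuous solution on `[0,∞)`. -/
theorem volterra_equation_unique_continuous_solution (ζ f : ℝ → ℂ)
    (hζ : ContinuousOn ζ (Set.Ici 0)) (hf : ContinuousOn f (Set.Ici 0)) :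
    (∃ q : ℝ → ℂ, ContinuousOn q (Set.Ici 0) ∧
      ∀ t : ℝ, 0 ≤ t →
        q t + ∫ τ in (0 : ℝ)..t, (volterraI (t - τ) : ℂ) * ζ τ * q τ = f t) ∧
    (∀ q₁ q₂ : ℝ → ℂ, ContinuousOn q₁ (Set.Ici 0) → ContinuousOn q₂ (Set.Ici 0) →
      (∀ t : ℝ, 0 ≤ t →
        q₁ t + ∫ τ in (0 : ℝ)..t, (volterraI (t - τ) : ℂ) * ζ τ * q₁ τ = f t) →
      (∀ t : ℝ, 0 ≤ t →
        q₂ t + ∫ τ in (0 : ℝ)..t, (volterraI (t - τ) : ℂ) * ζ τ * q₂ τ = f t) →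
      ∀ t : ℝ, 0 ≤ t → q₁ t = q₂ t) := by
  constructor
  · -- EXISTENCE
    set a : ℕ → ℝ → ℂ := fun n => n.rec f
      (fun _ p => fun t => -(∫ τ in (0:ℝ)..t, (volterraI (t - τ) : ℂ) * ζ τ * p τ)) with ha
    have ha0 : a 0 = f := rfl
    have haS : ∀ n, a (n+1) =
        fun t => -(∫ τ in (0:ℝ)..t, (volterraI (t - τ) : ℂ) * ζ τ * a n τ) := fun n => rfl
    have hacont : ∀ n, ContinuousOn (a n) (Ici 0) := by
      intro n
      induction n with
      | zero => exact hf
      | succ n ih => rw [haS]; exact (Vcont hζ ih).neg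
    -- master bounds on [0, T]
    have master : ∀ T : ℝ, 0 < T → ∃ B M θ : ℝ, ∃ lam : ℕ, 0 ≤ B ∧ 0 ≤ M ∧ 0 ≤ θ ∧ θ ≤ 1/2 ∧
        (∀ τ ∈ Icc (0:ℝ) T, ‖ζ τ‖ ≤ M) ∧
        (θ = M * ∫ u in Ioc (0:ℝ) T, volterraI u * Real.exp (-(lam:ℝ) * u)) ∧
        (∀ n, ∀ t ∈ Icc (0:ℝ) T, ‖a n t‖ ≤ B * θ^n * Real.exp ((lam:ℝ) * t)) := by
      intro T hT
      obtain ⟨M, hM0, hM⟩ := bound_of_contOn hζ T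
      obtain ⟨B, hB0, hB⟩ := bound_of_contOn hf T
      obtain ⟨lam, hlam⟩ := decay T M hM0
      have hθ0 : 0 ≤ M * ∫ u in Ioc (0:ℝ) T, volterraI u * Real.exp (-(lam:ℝ) * u) := by
        apply mul_nonneg hM0
        apply setIntegral_nonneg measurableSet_Ioc
        intro u hu
        exact mul_nonneg (volterraI_nonneg hu.1.le) (Real.exp_pos _).le
      refine ⟨B, M, _, lam, hB0, hM0, hθ0, hlam, hM, rfl, ?_⟩
      intro n
      induction n with
      | zero =>
        intro t ht
        rw [ha0]
        calc ‖f t‖ ≤ B := hB t ht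
        _ ≤ B * 1 * Real.exp ((lam:ℝ) * t) := by
            rw [mul_one]
            nlinarith [Real.one_le_exp (mul_nonneg (Nat.cast_nonneg (α := ℝ) lam) ht.1)]
        _ = B * _^0 * Real.exp ((lam:ℝ) * t) := by rw [pow_zero]
      | succ n ih =>
        intro t ht
        rw [haS, norm_neg]
        have step := Vbound hζ (hacont n) ht.1 ht.2 hM
          (mul_nonneg hB0 (pow_nonneg hθ0 n)) ih
        calc ‖∫ τ in (0:ℝ)..t, (volterraI (t - τ) : ℂ) * ζ τ * a n τ‖ ≤ _ := step
        _ = B * _^(n+1) * Real.exp ((lam:ℝ) * t) := by ring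
    -- the solution
    set q : ℝ → ℂ := fun t => ∑' n, a n t with hq
    have hsum : ∀ t : ℝ, 0 ≤ t → Summable (fun n => a n t) := by
      intro t ht
      obtain ⟨B, M, θ, lam, hB0, hM0, hθ0, hθh, hM, hθdef, hbnd⟩ := master (t+1) (by linarith)
      apply Summable.of_norm_bounded (g := fun n => (B * Real.exp ((lam:ℝ) * t)) * θ^n)
        (((summable_geometric_of_lt_one hθ0 (by linarith)).mul_left _))
      intro n
      calc ‖a n t‖ ≤ B * θ^n * Real.exp ((lam:ℝ) * t) := hbnd n t ⟨ht, by linarith⟩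
      _ = (B * Real.exp ((lam:ℝ) * t)) * θ^n := by ring
    refine ⟨q, ?_, ?_⟩
    · -- continuity of q
      apply glue_cont
      intro T hT
      obtain ⟨B, M, θ, lam, hB0, hM0, hθ0, hθh, hM, hθdef, hbnd⟩ := master T hT
      apply continuousOn_tsum (fun n => (hacont n).mono (Icc_subset_Ici_self))
        (((summable_geometric_of_lt_one hθ0 (by linarith)).mul_left
          (B * Real.exp ((lam:ℝ) * T))))
      intro n t ht
      calc ‖a n t‖ ≤ B * θ^n * Real.exp ((lam:ℝ) * t) := hbnd n t ht
      _ ≤ B * θ^n * Real.exp ((lam:ℝ) * T) := by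
          have h := Real.exp_le_exp.mpr (mul_le_mul_of_nonneg_left ht.2
            (Nat.cast_nonneg (α := ℝ) lam))
          exact mul_le_mul_of_nonneg_left h (mul_nonneg hB0 (pow_nonneg hθ0 n))
      _ = (B * Real.exp ((lam:ℝ) * T)) * θ^n := by ring
    · -- the equation
      intro t ht
      obtain ⟨B, M, θ, lam, hB0, hM0, hθ0, hθh, hM, hθdef, hbnd⟩ := master (t+1) (by linarith)
      have htT : t ≤ t + 1 := by linarith
      -- partial sums
      set S : ℕ → ℝ → ℂ := fun N τ => ∑ i ∈ Finset.range N, a i τ with hS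
      have hSsum : ∀ N, ∑ i ∈ Finset.range N, θ^i ≤ 2 := by
        intro N
        calc ∑ i ∈ Finset.range N, θ^i ≤ (∑' i : ℕ, θ^i) := by
              exact Summable.sum_le_tsum _ (fun i _ => pow_nonneg hθ0 i) (summable_geometric_of_lt_one hθ0 (by linarith))
        _ = (1 - θ)⁻¹ := tsum_geometric_of_lt_one hθ0 (by linarith)
        _ ≤ 2 := by
            rw [show (2:ℝ) = (1/2)⁻¹ by norm_num]
            exact inv_anti₀ (by norm_num) (by linarith)
      have hScont : ∀ N, ContinuousOn (S N) (Ici 0) := by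
        intro N
        apply continuousOn_finset_sum
        intro i _
        exact hacont i
      have hint : ∀ N : ℕ, IntegrableOn
          (fun τ => (volterraI (t - τ) : ℂ) * ζ τ * S N τ) (Ioc 0 t) :=
        fun N => Vint3 hζ (hScont N) ht
      have hlim : Filter.Tendsto
          (fun N => ∫ τ in Ioc (0:ℝ) t, (volterraI (t - τ) : ℂ) * ζ τ * S N τ)
          Filter.atTop (nhds (∫ τ in Ioc (0:ℝ) t, (volterraI (t - τ) : ℂ) * ζ τ * q τ)) := by
        apply tendsto_integral_of_dominated_convergence
          (bound := fun τ => volterraI (t - τ) * Real.exp (0 * τ) *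
            (M * (2 * B * Real.exp ((lam:ℝ) * t))))
          (fun N => (hint N).aestronglyMeasurable)
          ((Kexp_refl_int ht).mul_const _)
        · intro N
          filter_upwards [ae_restrict_mem measurableSet_Ioc] with τ hτ
          obtain ⟨hτ0, hτt⟩ := hτ
          have hK : 0 ≤ volterraI (t - τ) := volterraI_nonneg (by linarith)
          rw [norm_mul, norm_mul, Complex.norm_real, Real.norm_eq_abs, abs_of_nonneg hK]
          have h1 : ‖ζ τ‖ ≤ M := hM τ ⟨hτ0.le, by linarith⟩
          have h2 : ‖S N τ‖ ≤ 2 * B * Real.exp ((lam:ℝ) * t) := by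
            calc ‖S N τ‖ ≤ ∑ i ∈ Finset.range N, ‖a i τ‖ := norm_sum_le _ _
            _ ≤ ∑ i ∈ Finset.range N, B * θ^i * Real.exp ((lam:ℝ) * τ) := by
                apply Finset.sum_le_sum
                intro i _
                exact hbnd i τ ⟨hτ0.le, by linarith⟩
            _ = (B * Real.exp ((lam:ℝ) * τ)) * ∑ i ∈ Finset.range N, θ^i := by
                rw [Finset.mul_sum]; apply Finset.sum_congr rfl; intro i _; ring
            _ ≤ (B * Real.exp ((lam:ℝ) * τ)) * 2 := by
                apply mul_le_mul_of_nonneg_left (hSsum N) (by positivity)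
            _ ≤ 2 * B * Real.exp ((lam:ℝ) * t) := by
                have := Real.exp_le_exp.mpr (mul_le_mul_of_nonneg_left hτt
                  (Nat.cast_nonneg (α := ℝ) lam))
                nlinarith [Real.exp_pos ((lam:ℝ) * τ)]
          rw [show (0:ℝ) * τ = 0 by ring, Real.exp_zero, mul_one]
          calc volterraI (t - τ) * ‖ζ τ‖ * ‖S N τ‖
              ≤ volterraI (t - τ) * M * (2 * B * Real.exp ((lam:ℝ) * t)) := by
                apply mul_le_mul (mul_le_mul_of_nonneg_left h1 hK) h2 (norm_nonneg _)
                positivity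
          _ = volterraI (t - τ) * (M * (2 * B * Real.exp ((lam:ℝ) * t))) := by ring
        · filter_upwards [ae_restrict_mem measurableSet_Ioc] with τ hτ
          apply Filter.Tendsto.const_mul
          exact (hsum τ hτ.1.le).hasSum.tendsto_sum_nat
      -- compute the partial-sum integrals
      have hps : ∀ N : ℕ, (∫ τ in Ioc (0:ℝ) t, (volterraI (t - τ) : ℂ) * ζ τ * S N τ)
          = -(∑ i ∈ Finset.range (N+1), a i t) + a 0 t := by
        intro N
        have e1 : (∫ τ in Ioc (0:ℝ) t, (volterraI (t - τ) : ℂ) * ζ τ * S N τ)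
            = ∑ i ∈ Finset.range N, ∫ τ in Ioc (0:ℝ) t,
                (volterraI (t - τ) : ℂ) * ζ τ * a i τ := by
          rw [← integral_finset_sum _ (fun i _ => Vint3 hζ (hacont i) ht)]
          apply setIntegral_congr_fun measurableSet_Ioc
          intro τ _
          simp only [hS]
          rw [Finset.mul_sum]
        rw [e1]
        have e2 : ∀ i : ℕ, (∫ τ in Ioc (0:ℝ) t, (volterraI (t - τ) : ℂ) * ζ τ * a i τ)
            = -(a (i+1) t) := by
          intro i
          rw [haS i]
          rw [neg_neg, intervalIntegral.integral_of_le ht]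
        rw [Finset.sum_congr rfl (fun i _ => e2 i), Finset.sum_range_succ']
        simp [neg_add]
      -- limit of RHS
      have hrhs : Filter.Tendsto (fun N => -(∑ i ∈ Finset.range (N+1), a i t) + a 0 t)
          Filter.atTop (nhds (-(q t) + a 0 t)) := by
        apply Filter.Tendsto.add_const
        apply Filter.Tendsto.neg
        exact ((hsum t ht).hasSum.tendsto_sum_nat).comp (Filter.tendsto_add_atTop_nat 1)
      have heq : (∫ τ in Ioc (0:ℝ) t, (volterraI (t - τ) : ℂ) * ζ τ * q τ)
          = -(q t) + a 0 t := by
        apply tendsto_nhds_unique _ hrhs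
        rw [show (fun N => -(∑ i ∈ Finset.range (N+1), a i t) + a 0 t)
          = fun N => ∫ τ in Ioc (0:ℝ) t, (volterraI (t - τ) : ℂ) * ζ τ * S N τ from
          funext fun N => (hps N).symm]
        exact hlim
      rw [intervalIntegral.integral_of_le ht, heq, ha0]
      ring
  · -- UNIQUENESS
    intro q₁ q₂ hq₁ hq₂ heq₁ heq₂ t₀ ht₀
    set d : ℝ → ℂ := fun τ => q₁ τ - q₂ τ with hd
    have hdcont : ContinuousOn d (Ici 0) := hq₁.sub hq₂
    have hdeq : ∀ t : ℝ, 0 ≤ t →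
        d t = -(∫ τ in (0:ℝ)..t, (volterraI (t - τ) : ℂ) * ζ τ * d τ) := by
      intro t ht
      have h1 := heq₁ t ht
      have h2 := heq₂ t ht
      have e : (∫ τ in (0:ℝ)..t, (volterraI (t - τ) : ℂ) * ζ τ * d τ)
          = (∫ τ in (0:ℝ)..t, (volterraI (t - τ) : ℂ) * ζ τ * q₁ τ)
            - ∫ τ in (0:ℝ)..t, (volterraI (t - τ) : ℂ) * ζ τ * q₂ τ := by
        rw [intervalIntegral.integral_of_le ht, intervalIntegral.integral_of_le ht,
          intervalIntegral.integral_of_le ht,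
          ← integral_sub (Vint3 hζ hq₁ ht) (Vint3 hζ hq₂ ht)]
        apply setIntegral_congr_fun measurableSet_Ioc
        intro τ _
        simp only [hd]
        ring
      rw [e, hd]
      simp only []
      rw [neg_sub]
      calc q₁ t - q₂ t = (f t - ∫ τ in (0:ℝ)..t, (volterraI (t - τ) : ℂ) * ζ τ * q₁ τ)
          - (f t - ∫ τ in (0:ℝ)..t, (volterraI (t - τ) : ℂ) * ζ τ * q₂ τ) := by
            rw [← eq_sub_iff_add_eq.mpr h1, ← eq_sub_iff_add_eq.mpr h2]
      _ = _ := by ring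
    set T : ℝ := t₀ + 1 with hT
    have hT0 : (0:ℝ) < T := by linarith
    obtain ⟨M, hM0, hM⟩ := bound_of_contOn hζ T
    obtain ⟨lam, hlam⟩ := decay T M hM0
    -- maximum of weighted norm
    have hwcont : ContinuousOn (fun τ => ‖d τ‖ * Real.exp (-(lam:ℝ) * τ)) (Icc 0 T) :=
      ((hdcont.mono Icc_subset_Ici_self).norm).mul (by fun_prop)
    obtain ⟨τs, hτs, hmax⟩ := isCompact_Icc.exists_isMaxOn
      (nonempty_Icc.mpr hT0.le) hwcont
    set W : ℝ := ‖d τs‖ * Real.exp (-(lam:ℝ) * τs) with hW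
    have hW0 : 0 ≤ W := mul_nonneg (norm_nonneg _) (Real.exp_pos _).le
    have hdb : ∀ τ ∈ Icc (0:ℝ) T, ‖d τ‖ ≤ W * Real.exp ((lam:ℝ) * τ) := by
      intro τ hτ
      have h1 : ‖d τ‖ * Real.exp (-(lam:ℝ) * τ) ≤ W := hmax hτ
      have h2 : Real.exp (-(lam:ℝ) * τ) * Real.exp ((lam:ℝ) * τ) = 1 := by
        rw [← Real.exp_add]; ring_nf; exact Real.exp_zero
      nlinarith [Real.exp_pos ((lam:ℝ) * τ), Real.exp_pos (-(lam:ℝ) * τ)]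
    have hstep := Vbound hζ hdcont hτs.1 hτs.2 hM hW0 hdb
    have hds : ‖d τs‖ = ‖∫ τ in (0:ℝ)..τs, (volterraI (τs - τ) : ℂ) * ζ τ * d τ‖ := by
      rw [hdeq τs hτs.1, norm_neg]
    rw [← hds] at hstep
    -- conclude W = 0
    have hWle : W ≤ W * (1/2) := by
      have h2 : Real.exp (-(lam:ℝ) * τs) * Real.exp ((lam:ℝ) * τs) = 1 := by
        rw [← Real.exp_add]; ring_nf; exact Real.exp_zero
      have h3 : W ≤ W * (M * ∫ u in Ioc (0:ℝ) T, volterraI u * Real.exp (-(lam:ℝ) * u)) := by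
        calc W = ‖d τs‖ * Real.exp (-(lam:ℝ) * τs) := rfl
        _ ≤ (W * Real.exp ((lam:ℝ) * τs) *
            (M * ∫ u in Ioc (0:ℝ) T, volterraI u * Real.exp (-(lam:ℝ) * u)))
            * Real.exp (-(lam:ℝ) * τs) := by
            apply mul_le_mul_of_nonneg_right hstep (Real.exp_pos _).le
        _ = W * (M * ∫ u in Ioc (0:ℝ) T, volterraI u * Real.exp (-(lam:ℝ) * u)) := by
            linear_combination W * (M * ∫ u in Ioc (0:ℝ) T,
              volterraI u * Real.exp (-(lam:ℝ) * u)) * h2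
      calc W ≤ W * (M * ∫ u in Ioc (0:ℝ) T, volterraI u * Real.exp (-(lam:ℝ) * u)) := h3
      _ ≤ W * (1/2) := mul_le_mul_of_nonneg_left hlam hW0
    have hWzero : W = 0 := by nlinarith
    have : ‖d t₀‖ ≤ 0 := by
      have := hdb t₀ ⟨ht₀, by linarith⟩
      rw [hWzero] at this
      simpa using this
    have : d t₀ = 0 := norm_le_zero_iff.mp this
    exact sub_eq_zero.mp this
end

section
/- For every T > 0 and every c > 0, the integral ∫₀^∞ c^s μ(T, s, 0) ds is finite. -/
open MeasureTheory

open Set in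
set_option maxHeartbeats 1000000 in
lemma gammaLB {s : ℝ} (hs : 0 < s) : s ^ s ≤ Real.Gamma (s + 1) * Real.exp (s + 1) := by
  have h1 : Real.Gamma (s + 1) = ∫ x in Ioi (0:ℝ), Real.exp (-x) * x ^ s := by
    rw [Real.Gamma_eq_integral (by linarith)]
    simp
  have hint : IntegrableOn (fun x : ℝ => Real.exp (-x) * x ^ s) (Ioi 0) := by
    have := Real.GammaIntegral_convergent (s := s + 1) (by linarith)
    simpa using this
  have hsub : Ioc s (s + 1) ⊆ Ioi (0:ℝ) := fun x hx => lt_trans hs hx.1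
  have h2 : ∫ x in Ioc s (s+1), Real.exp (-(s+1)) * s ^ s ≤
      ∫ x in Ioc s (s+1), Real.exp (-x) * x ^ s := by
    apply setIntegral_mono_on
    · exact (integrableOn_const (by simp) enorm_ne_top)
    · exact hint.mono_set hsub
    · exact measurableSet_Ioc
    · intro x hx
      apply mul_le_mul
      · exact Real.exp_le_exp.2 (by linarith [hx.2])
      · exact Real.rpow_le_rpow hs.le hx.1.le hs.le
      · exact Real.rpow_nonneg hs.le s
      · positivity
  have h3 : ∫ x in Ioc s (s+1), Real.exp (-x) * x ^ s ≤
      ∫ x in Ioi (0:ℝ), Real.exp (-x) * x ^ s := by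
    apply setIntegral_mono_set hint
    · filter_upwards [self_mem_ae_restrict measurableSet_Ioi] with x hx
      exact mul_nonneg (Real.exp_pos _).le (Real.rpow_nonneg (le_of_lt (Set.mem_Ioi.1 hx)) s)
    · exact HasSubset.Subset.eventuallyLE hsub
  have h4 : ∫ x in Ioc s (s+1), Real.exp (-(s+1)) * s ^ s = Real.exp (-(s+1)) * s ^ s := by
    rw [setIntegral_const]
    simp [Real.volume_Ioc]
  rw [← h1] at h3
  have := le_trans (h4 ▸ h2) h3
  have he : Real.exp (-(s+1)) * Real.exp (s+1) = 1 := by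
    rw [← Real.exp_add, show -(s+1)+(s+1) = (0:ℝ) by ring, Real.exp_zero]
  calc s ^ s = (Real.exp (-(s+1)) * s ^ s) * Real.exp (s+1) := by
        rw [mul_comm (Real.exp (-(s+1))) _, mul_assoc, he, mul_one]
    _ ≤ Real.Gamma (s+1) * Real.exp (s+1) := by
        apply mul_le_mul_of_nonneg_right this (Real.exp_pos _).le

lemma keyBound {b k s : ℝ} (hb : 0 < b) (hk : 0 < k) (hs : 0 < s) :
    b ^ s ≤ Real.exp (k * b + 1) * Real.Gamma (s + 1) * k ^ (-s) := by
  have hlog : Real.log b ≤ k * b / s - 1 + Real.log (s / k) := by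
    have h := Real.log_le_sub_one_of_pos (x := b * k / s) (by positivity)
    have : Real.log (b * k / s) = Real.log b - Real.log (s / k) := by
      rw [Real.log_div (by positivity) hs.ne', Real.log_mul hb.ne' hk.ne',
        Real.log_div hs.ne' hk.ne']
      ring
    rw [this] at h
    have : b * k / s = k * b / s := by ring
    linarith [this ▸ h]
  have h1 : b ^ s ≤ Real.exp (k * b) * Real.exp (-s) * (s / k) ^ s := by
    rw [Real.rpow_def_of_pos hb, Real.rpow_def_of_pos (by positivity : (0:ℝ) < s / k),
      ← Real.exp_add, ← Real.exp_add]
    apply Real.exp_le_exp.2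
    calc Real.log b * s ≤ (k * b / s - 1 + Real.log (s / k)) * s := by
          apply mul_le_mul_of_nonneg_right hlog hs.le
      _ = k * b + -s + Real.log (s / k) * s := by
          field_simp
          ring
  have h2 : (s / k) ^ s = s ^ s * k ^ (-s) := by
    rw [Real.div_rpow hs.le hk.le, Real.rpow_neg hk.le, div_eq_mul_inv]
  calc b ^ s ≤ Real.exp (k * b) * Real.exp (-s) * (s ^ s * k ^ (-s)) := h2 ▸ h1
    _ ≤ Real.exp (k * b) * Real.exp (-s) * ((Real.Gamma (s+1) * Real.exp (s+1)) * k ^ (-s)) := by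
        apply mul_le_mul_of_nonneg_left
        · apply mul_le_mul_of_nonneg_right (gammaLB hs) (by positivity)
        · positivity
    _ = Real.exp (k * b + 1) * Real.Gamma (s + 1) * k ^ (-s) := by
        rw [← Real.exp_add, show Real.exp (k * b + 1) =
          Real.exp (k * b + -s) * Real.exp (s + 1) by rw [← Real.exp_add]; ring_nf]
        ring

/-- The Volterra `μ`-functions: `μ(t,β,δ) = ∫₀^∞ t^(δ+s) s^β / (Γ(β+1) Γ(δ+s+1)) ds`. -/
noncomputable def volterraMu (t β δ : ℝ) : ℝ :=
  ∫ s in Set.Ioi (0 : ℝ), t ^ (δ + s) * s ^ β / (Real.Gamma (β + 1) * Real.Gamma (δ + s + 1))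

open Set in
set_option maxHeartbeats 1000000 in
/-- For every `T > 0` and `c > 0`, the integral `∫₀^∞ c^s μ(T,s,0) ds` is finite. -/
theorem integral_rpow_mul_volterraMu_lt_top (T c : ℝ) (hT : 0 < T) (hc : 0 < c) :
    ∫⁻ s in Set.Ioi (0 : ℝ), ENNReal.ofReal (c ^ s * volterraMu T s 0) < ⊤ := by
  obtain ⟨k, hkdef⟩ : ∃ k : ℝ, k = c + 1 := ⟨_, rfl⟩
  have hkpos : 0 < k := by rw [hkdef]; positivity
  obtain ⟨X, hXdef⟩ : ∃ X : ℝ, X = T * Real.exp k := ⟨_, rfl⟩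
  have hX : 0 < X := by rw [hXdef]; positivity
  obtain ⟨J, hJdef⟩ : ∃ J : ℝ, J = ∫ u in Ioi (0:ℝ), Real.exp (-(Real.log 3) * u) := ⟨_, rfl⟩
  have hlog3 : 0 < Real.log 3 := Real.log_pos (by norm_num)
  have hJint : IntegrableOn (fun u : ℝ => Real.exp (-(Real.log 3) * u)) (Ioi 0) :=
    exp_neg_integrableOn_Ioi 0 hlog3
  have hJ0 : 0 ≤ J := hJdef ▸ setIntegral_nonneg measurableSet_Ioi fun u _ => (Real.exp_pos _).le
  obtain ⟨C1, hC1def⟩ : ∃ C1 : ℝ, C1 = Real.exp (3 * X + 2) := ⟨_, rfl⟩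
  have hC1 : 0 < C1 := hC1def ▸ Real.exp_pos _
  -- bound on volterraMu for s > 0
  have hvb : ∀ s : ℝ, 0 < s → volterraMu T s 0 ≤ C1 * k ^ (-s) * J := by
    intro s hs
    have hGs : 0 < Real.Gamma (s + 1) := Real.Gamma_pos_of_pos (by linarith)
    have hgle : ∀ u ∈ Ioi (0:ℝ),
        T ^ (0 + u) * u ^ s / (Real.Gamma (s + 1) * Real.Gamma (0 + u + 1)) ≤
          C1 * k ^ (-s) * Real.exp (-(Real.log 3) * u) := by
      intro u hu
      rw [Set.mem_Ioi] at hu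
      have hGu : 0 < Real.Gamma (u + 1) := Real.Gamma_pos_of_pos (by linarith)
      have hb1 : u ^ s ≤ Real.exp (k * u + 1) * Real.Gamma (s + 1) * k ^ (-s) :=
        keyBound hu hkpos hs
      have hb2 : X ^ u ≤ Real.exp (3 * X + 1) * Real.Gamma (u + 1) * (3:ℝ) ^ (-u) :=
        keyBound hX (by norm_num) hu
      have hmul : X ^ u = T ^ u * Real.exp (k * u) := by
        rw [hXdef, Real.mul_rpow hT.le (Real.exp_pos k).le, ← Real.exp_mul]
      have h3u : (3:ℝ) ^ (-u) = Real.exp (-(Real.log 3) * u) := by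
        rw [Real.rpow_def_of_pos (by norm_num : (0:ℝ) < 3)]
        ring_nf
      rw [zero_add, div_le_iff₀ (by positivity)]
      calc T ^ u * u ^ s
          ≤ T ^ u * (Real.exp (k * u + 1) * Real.Gamma (s + 1) * k ^ (-s)) :=
            mul_le_mul_of_nonneg_left hb1 (Real.rpow_nonneg hT.le u)
        _ = (Real.exp 1 * k ^ (-s) * Real.Gamma (s + 1)) * X ^ u := by
            rw [hmul, Real.exp_add]; ring
        _ ≤ (Real.exp 1 * k ^ (-s) * Real.Gamma (s + 1)) *
              (Real.exp (3 * X + 1) * Real.Gamma (u + 1) * (3:ℝ) ^ (-u)) := by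
            apply mul_le_mul_of_nonneg_left hb2
            have := Real.rpow_nonneg hkpos.le (-s)
            positivity
        _ = C1 * k ^ (-s) * Real.exp (-(Real.log 3) * u) *
              (Real.Gamma (s + 1) * Real.Gamma (u + 1)) := by
            have hee : C1 = Real.exp (3 * X + 1) * Real.exp 1 := by
              rw [hC1def, ← Real.exp_add]; ring_nf
            rw [← h3u, hee]; ring
    have hgint : IntegrableOn
        (fun u : ℝ => C1 * k ^ (-s) * Real.exp (-(Real.log 3) * u)) (Ioi 0) :=
      hJint.const_mul _
    have hJeq : ∫ u in Ioi (0:ℝ), C1 * k ^ (-s) * Real.exp (-(Real.log 3) * u) =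
        C1 * k ^ (-s) * J := by
      rw [hJdef, integral_const_mul]
    rw [volterraMu, ← hJeq]
    by_cases hi : IntegrableOn
        (fun u : ℝ => T ^ (0 + u) * u ^ s / (Real.Gamma (s + 1) * Real.Gamma (0 + u + 1)))
        (Ioi 0)
    · exact setIntegral_mono_on hi hgint measurableSet_Ioi hgle
    · rw [integral_undef hi]
      apply setIntegral_nonneg measurableSet_Ioi
      intro u _
      have := Real.rpow_nonneg hkpos.le (-s)
      positivity
  -- the final exponential bound
  obtain ⟨r, hrdef⟩ : ∃ r : ℝ, r = Real.log (k / c) := ⟨_, rfl⟩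
  have hr : 0 < r := hrdef ▸ Real.log_pos (by rw [lt_div_iff₀ hc, hkdef]; linarith)
  have hfinal : ∀ s ∈ Ioi (0:ℝ),
      ENNReal.ofReal (c ^ s * volterraMu T s 0) ≤
        ENNReal.ofReal (C1 * J * Real.exp (-r * s)) := by
    intro s hs
    rw [Set.mem_Ioi] at hs
    apply ENNReal.ofReal_le_ofReal
    have h1 : c ^ s * volterraMu T s 0 ≤ c ^ s * (C1 * k ^ (-s) * J) :=
      mul_le_mul_of_nonneg_left (hvb s hs) (Real.rpow_nonneg hc.le s)
    have h2 : c ^ s * k ^ (-s) = Real.exp (-r * s) := by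
      rw [Real.rpow_neg hkpos.le, Real.rpow_def_of_pos hc, Real.rpow_def_of_pos hkpos,
        ← Real.exp_neg, ← Real.exp_add, hrdef, Real.log_div hkpos.ne' hc.ne']
      ring_nf
    calc c ^ s * volterraMu T s 0 ≤ c ^ s * (C1 * k ^ (-s) * J) := h1
      _ = C1 * J * (c ^ s * k ^ (-s)) := by ring
      _ = C1 * J * Real.exp (-r * s) := by rw [h2]
  have hmeas : Measurable fun s : ℝ => ENNReal.ofReal (C1 * J * Real.exp (-r * s)) := by
    have h : Continuous fun s : ℝ => C1 * J * Real.exp (-r * s) := by fun_prop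
    exact h.measurable.ennreal_ofReal
  calc ∫⁻ s in Set.Ioi (0:ℝ), ENNReal.ofReal (c ^ s * volterraMu T s 0)
      ≤ ∫⁻ s in Set.Ioi (0:ℝ), ENNReal.ofReal (C1 * J * Real.exp (-r * s)) :=
        setLIntegral_mono hmeas hfinal
    _ < ⊤ := ((exp_neg_integrableOn_Ioi 0 hr).const_mul (C1 * J)).lintegral_lt_top
end

section
/- For every T > 0 and every c > 0 one has the identity ∫₀^∞ c^s μ(T, s, 0) ds = ∫₀^∞ T^s μ(c·s, 0, 0) / Γ(s+1) ds (both integrals being equal as extended nonnegative quantities). -/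
open MeasureTheory

open Set

-- Gamma lower bound
lemma gamma_lb_s3 {M u : ℝ} (hM : 1 ≤ M) (hu : 0 ≤ u) :
    M ^ u * Real.exp (-(M + 1)) ≤ Real.Gamma (u + 1) := by
  have hM0 : (0:ℝ) < M := lt_of_lt_of_le one_pos hM
  rw [Real.Gamma_eq_integral (by linarith : (0:ℝ) < u + 1)]
  simp only [add_sub_cancel_right]
  have hint : IntegrableOn (fun x : ℝ => Real.exp (-x) * x ^ u) (Ioi 0) := by
    have := Real.GammaIntegral_convergent (by linarith : (0:ℝ) < u + 1)
    simpa using this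
  have h1 : M ^ u * Real.exp (-(M + 1))
      ≤ ∫ x in Ioc M (M + 1), Real.exp (-x) * x ^ u := by
    have hconst : ∫ x in Ioc M (M + 1), (Real.exp (-(M+1)) * M ^ u)
        = Real.exp (-(M+1)) * M ^ u := by
      rw [setIntegral_const]
      rw [measureReal_def, Real.volume_Ioc]
      norm_num
    calc M ^ u * Real.exp (-(M + 1))
        = ∫ x in Ioc M (M + 1), (Real.exp (-(M+1)) * M ^ u) := by rw [hconst]; ring
      _ ≤ ∫ x in Ioc M (M + 1), Real.exp (-x) * x ^ u := by
          apply setIntegral_mono_on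
          · exact (integrableOn_const measure_Ioc_lt_top.ne enorm_ne_top)
          · exact hint.mono_set (fun x hx => lt_of_lt_of_le hM0 hx.1.le)
          · exact measurableSet_Ioc
          · intro x hx
            have hx1 : M ≤ x := hx.1.le
            have hx0 : (0:ℝ) < x := lt_of_lt_of_le hM0 hx.1.le
            have h1 : Real.exp (-(M+1)) ≤ Real.exp (-x) := Real.exp_le_exp.2 (by linarith [hx.2])
            have h2 : M ^ u ≤ x ^ u := Real.rpow_le_rpow hM0.le hx1 hu
            have hp : (0:ℝ) ≤ M ^ u := by positivity
            exact mul_le_mul h1 h2 hp (Real.exp_pos _).le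
  refine h1.trans ?_
  apply setIntegral_mono_set hint
  · filter_upwards [self_mem_ae_restrict measurableSet_Ioi] with x hx
    have hx0 : (0:ℝ) < x := hx
    positivity
  · exact Filter.Eventually.of_forall (fun x hx => lt_of_lt_of_le hM0 hx.1.le)

-- Integrability lemma
lemma integrable_aux {a b : ℝ} (ha : 0 < a) (hb : 0 ≤ b) :
    IntegrableOn (fun u : ℝ => a ^ u * u ^ b / Real.Gamma (u + 1)) (Ioi 0) := by
  set M : ℝ := max (2 * a) 1 with hMdef
  have hM1 : (1:ℝ) ≤ M := le_max_right _ _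
  have hM0 : (0:ℝ) < M := lt_of_lt_of_le one_pos hM1
  have haM : a < M := lt_of_lt_of_le (by linarith) (le_max_left _ _)
  set l : ℝ := Real.log (M / a) with hl
  have hl0 : 0 < l := Real.log_pos (by rw [lt_div_iff₀ ha]; linarith)
  have hdom : IntegrableOn
      (fun u : ℝ => Real.exp (M + 1) * (u ^ b * Real.exp (-l * u))) (Ioi 0) := by
    have := integrableOn_rpow_mul_exp_neg_mul_rpow (p := 1) (s := b) (b := l)
      (by linarith) one_pos hl0
    have heq : (fun x : ℝ => x ^ b * Real.exp (-l * x ^ (1:ℝ)))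
        = fun x : ℝ => x ^ b * Real.exp (-l * x) := by
      funext x; rw [Real.rpow_one]
    rw [heq] at this
    exact this.const_mul _
  apply hdom.mono'
  · -- a.e. strongly measurable
    apply ContinuousOn.aestronglyMeasurable _ measurableSet_Ioi
    apply ContinuousOn.div
    · apply ContinuousOn.mul
      · exact (continuous_const.rpow continuous_id (fun _ => Or.inl ha.ne')).continuousOn
      · exact ContinuousOn.rpow continuousOn_id continuousOn_const
          (fun x hx => Or.inl (ne_of_gt hx))
    · intro x hx
      exact ((Real.differentiableAt_Gamma (fun m => by
        have : (0:ℝ) < x + 1 := by have := (mem_Ioi.mp hx); linarith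
        intro h; rw [h] at this; have : (0:ℝ) ≤ (m:ℝ) := Nat.cast_nonneg m; linarith)).continuousAt.comp
        (by fun_prop : ContinuousAt (fun y : ℝ => y + 1) x)).continuousWithinAt
    · intro x hx
      exact (Real.Gamma_pos_of_pos (by have := mem_Ioi.mp hx; linarith)).ne'
  · filter_upwards [self_mem_ae_restrict measurableSet_Ioi] with u hu
    have hu0 : (0:ℝ) < u := mem_Ioi.mp hu
    have hG : M ^ u * Real.exp (-(M + 1)) ≤ Real.Gamma (u + 1) := gamma_lb_s3 hM1 hu0.le
    have hGpos : (0:ℝ) < M ^ u * Real.exp (-(M + 1)) := by positivity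
    have hnn : (0:ℝ) ≤ a ^ u * u ^ b / Real.Gamma (u + 1) := by positivity
    rw [Real.norm_eq_abs, abs_of_nonneg hnn]
    have step1 : a ^ u * u ^ b / Real.Gamma (u + 1)
        ≤ a ^ u * u ^ b / (M ^ u * Real.exp (-(M + 1))) := by
      apply div_le_div_of_nonneg_left _ hGpos hG
      positivity
    refine step1.trans (le_of_eq ?_)
    have hlog : Real.log (a / M) = -l := by
      rw [hl, ← Real.log_inv]; congr 1; rw [inv_div]
    have hexp : (a / M) ^ u = Real.exp (-l * u) := by
      rw [Real.rpow_def_of_pos (by positivity), hlog]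
    rw [← hexp, Real.div_rpow ha.le hM0.le, Real.exp_neg]
    field_simp

/-- For every `T > 0` and `c > 0`:
`∫₀^∞ c^s μ(T,s,0) ds = ∫₀^∞ T^s μ(c·s,0,0)/Γ(s+1) ds`, as extended nonnegative quantities. -/
theorem integral_rpow_mul_volterraMu_eq (T c : ℝ) (hT : 0 < T) (hc : 0 < c) :
    ∫⁻ s in Set.Ioi (0 : ℝ), ENNReal.ofReal (c ^ s * volterraMu T s 0) =
      ∫⁻ s in Set.Ioi (0 : ℝ),
        ENNReal.ofReal (T ^ s * volterraMu (c * s) 0 0 / Real.Gamma (s + 1)) := by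
  have hGcont : ∀ y : ℝ, 0 < y → ContinuousAt Real.Gamma y := fun y hy =>
    (Real.differentiableAt_Gamma (fun m =>
      (ne_of_gt (lt_of_le_of_lt (neg_nonpos.mpr (Nat.cast_nonneg m)) hy)))).continuousAt
  -- Step A
  have hA : ∀ s : ℝ, s ∈ Ioi (0:ℝ) → ENNReal.ofReal (c ^ s * volterraMu T s 0)
      = ∫⁻ u in Ioi (0:ℝ),
          ENNReal.ofReal (c ^ s * T ^ u * u ^ s / (Real.Gamma (s+1) * Real.Gamma (u+1))) := by
    intro s hs
    have hs0 : (0:ℝ) < s := hs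
    have hGs : 0 < Real.Gamma (s+1) := Real.Gamma_pos_of_pos (by linarith)
    have hint : IntegrableOn
        (fun u : ℝ => T ^ ((0:ℝ) + u) * u ^ s / (Real.Gamma (s+1) * Real.Gamma (0 + u + 1)))
        (Ioi 0) := by
      have heq : (fun u : ℝ => T ^ ((0:ℝ)+u) * u ^ s / (Real.Gamma (s+1) * Real.Gamma (0+u+1)))
          = fun u => (Real.Gamma (s+1))⁻¹ * (T ^ u * u ^ s / Real.Gamma (u+1)) := by
        funext u; field_simp; simp only [zero_add]; ring
      rw [heq]; exact (integrable_aux hT hs0.le).const_mul _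
    have hnn : 0 ≤ᵐ[volume.restrict (Ioi 0)]
        fun u : ℝ => T ^ ((0:ℝ)+u) * u ^ s / (Real.Gamma (s+1) * Real.Gamma (0+u+1)) := by
      filter_upwards [self_mem_ae_restrict measurableSet_Ioi] with u hu
      have hu0 : (0:ℝ) < u := hu
      have hG : 0 < Real.Gamma (0+u+1) := Real.Gamma_pos_of_pos (by linarith)
      positivity
    rw [volterraMu, ENNReal.ofReal_mul (by positivity : (0:ℝ) ≤ c ^ s),
      ofReal_integral_eq_lintegral_ofReal hint hnn,
      ← lintegral_const_mul' _ _ ENNReal.ofReal_ne_top]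
    refine setLIntegral_congr_fun measurableSet_Ioi (fun u hu => ?_)
    rw [← ENNReal.ofReal_mul (by positivity : (0:ℝ) ≤ c ^ s)]
    congr 1
    ring
  -- Step B
  have hB : ∀ s : ℝ, s ∈ Ioi (0:ℝ) →
      ENNReal.ofReal (T ^ s * volterraMu (c * s) 0 0 / Real.Gamma (s + 1))
      = ∫⁻ u in Ioi (0:ℝ),
          ENNReal.ofReal (c ^ u * T ^ s * s ^ u / (Real.Gamma (u+1) * Real.Gamma (s+1))) := by
    intro s hs
    have hs0 : (0:ℝ) < s := hs
    have hGs : 0 < Real.Gamma (s+1) := Real.Gamma_pos_of_pos (by linarith)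
    have hint : IntegrableOn
        (fun u : ℝ => (c*s) ^ ((0:ℝ) + u) * u ^ (0:ℝ) / (Real.Gamma (0+1) * Real.Gamma (0+u+1)))
        (Ioi 0) := by
      have heq : (fun u : ℝ => (c*s) ^ ((0:ℝ)+u) * u ^ (0:ℝ) / (Real.Gamma (0+1) * Real.Gamma (0+u+1)))
          = fun u => (c*s) ^ u * u ^ (0:ℝ) / Real.Gamma (u+1) := by
        funext u
        simp only [zero_add, Real.Gamma_one, one_mul]
      rw [heq]; exact integrable_aux (mul_pos hc hs0) le_rfl
    have hnn : 0 ≤ᵐ[volume.restrict (Ioi 0)]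
        fun u : ℝ => (c*s) ^ ((0:ℝ)+u) * u ^ (0:ℝ) / (Real.Gamma (0+1) * Real.Gamma (0+u+1)) := by
      filter_upwards [self_mem_ae_restrict measurableSet_Ioi] with u hu
      have hu0 : (0:ℝ) < u := hu
      have hG : 0 < Real.Gamma (0+u+1) := Real.Gamma_pos_of_pos (by linarith)
      have hG1 : 0 < Real.Gamma (0+1) := Real.Gamma_pos_of_pos (by norm_num)
      have hcs : (0:ℝ) < c * s := mul_pos hc hs0
      positivity
    have hk : (0:ℝ) ≤ T ^ s / Real.Gamma (s+1) := by positivity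
    have hrw : T ^ s * volterraMu (c * s) 0 0 / Real.Gamma (s + 1)
        = (T ^ s / Real.Gamma (s+1)) * volterraMu (c * s) 0 0 := by ring
    rw [hrw, volterraMu, ENNReal.ofReal_mul hk,
      ofReal_integral_eq_lintegral_ofReal hint hnn,
      ← lintegral_const_mul' _ _ ENNReal.ofReal_ne_top]
    refine setLIntegral_congr_fun measurableSet_Ioi (fun u hu => ?_)
    have hu0 : (0:ℝ) < u := hu
    rw [← ENNReal.ofReal_mul hk]
    congr 1
    simp only [zero_add, Real.Gamma_one, one_mul, Real.rpow_zero, mul_one]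
    rw [Real.mul_rpow hc.le hs0.le]
    field_simp
  -- continuity / measurability for the swap
  have hcont : ContinuousOn (fun p : ℝ × ℝ =>
      c ^ p.1 * T ^ p.2 * p.2 ^ p.1 / (Real.Gamma (p.1+1) * Real.Gamma (p.2+1)))
      (Ioi (0:ℝ) ×ˢ Ioi (0:ℝ)) := by
    apply ContinuousOn.div
    · refine ContinuousOn.mul ?_ ?_
      · exact ((continuous_const.rpow continuous_fst fun _ => Or.inl hc.ne').mul
          (continuous_const.rpow continuous_snd fun _ => Or.inl hT.ne')).continuousOn
      · exact ContinuousOn.rpow continuous_snd.continuousOn continuous_fst.continuousOn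
          (fun p hp => Or.inl (ne_of_gt (mem_prod.mp hp).2))
    · refine ContinuousOn.mul ?_ ?_
      · intro p hp
        have h1 : (0:ℝ) < p.1 := (mem_prod.mp hp).1
        exact ((hGcont _ (by show (0:ℝ) < p.1 + 1; linarith)).comp
          ((continuous_fst.add continuous_const).continuousAt)).continuousWithinAt
      · intro p hp
        have h2 : (0:ℝ) < p.2 := (mem_prod.mp hp).2
        exact ((hGcont _ (by show (0:ℝ) < p.2 + 1; linarith)).comp
          ((continuous_snd.add continuous_const).continuousAt)).continuousWithinAt
    · intro p hp
      have h1 : (0:ℝ) < p.1 := (mem_prod.mp hp).1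
      have h2 : (0:ℝ) < p.2 := (mem_prod.mp hp).2
      have g1 : 0 < Real.Gamma (p.1+1) := Real.Gamma_pos_of_pos (by linarith)
      have g2 : 0 < Real.Gamma (p.2+1) := Real.Gamma_pos_of_pos (by linarith)
      exact (mul_pos g1 g2).ne'
  have hmeas : AEMeasurable (fun p : ℝ × ℝ =>
      ENNReal.ofReal (c ^ p.1 * T ^ p.2 * p.2 ^ p.1 / (Real.Gamma (p.1+1) * Real.Gamma (p.2+1))))
      ((volume.restrict (Ioi (0:ℝ))).prod (volume.restrict (Ioi (0:ℝ)))) := by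
    rw [Measure.prod_restrict]
    exact ENNReal.measurable_ofReal.comp_aemeasurable
      (hcont.aemeasurable (measurableSet_Ioi.prod measurableSet_Ioi))
  calc ∫⁻ s in Ioi (0:ℝ), ENNReal.ofReal (c ^ s * volterraMu T s 0)
      = ∫⁻ s in Ioi (0:ℝ), ∫⁻ u in Ioi (0:ℝ),
          ENNReal.ofReal (c ^ s * T ^ u * u ^ s / (Real.Gamma (s+1) * Real.Gamma (u+1))) :=
        setLIntegral_congr_fun measurableSet_Ioi hA
    _ = ∫⁻ u in Ioi (0:ℝ), ∫⁻ s in Ioi (0:ℝ),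
          ENNReal.ofReal (c ^ s * T ^ u * u ^ s / (Real.Gamma (s+1) * Real.Gamma (u+1))) :=
        lintegral_lintegral_swap hmeas
    _ = ∫⁻ s in Ioi (0:ℝ),
          ENNReal.ofReal (T ^ s * volterraMu (c * s) 0 0 / Real.Gamma (s + 1)) :=
        (setLIntegral_congr_fun measurableSet_Ioi hB).symm
end

section
/- For every ε > 0 there exists ν > 1 such that ∫₀^∞ e^{−νt} 𝓘(t) dt < ε; in particular, ∫₀^∞ e^{−νt} 𝓘(t) dt is finite for such ν. -/
open MeasureTheory

open Set Real Filter

/-- integrability of `t ^ (s-1) * exp (-(r*t))` on `Ioi 0`. -/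
lemma integrableOn_rpow_mul_exp_neg_mul_aux {s r : ℝ} (hs : 0 < s) (hr : 0 < r) :
    IntegrableOn (fun t : ℝ => t ^ (s - 1) * Real.exp (-(r * t))) (Ioi 0) := by
  have h := integrableOn_rpow_mul_exp_neg_mul_rpow (p := 1) (s := s - 1) (b := r)
    (by linarith) zero_lt_one hr
  refine h.congr_fun (fun t ht => ?_) measurableSet_Ioi
  beta_reduce
  rw [Real.rpow_one, neg_mul]

lemma lintegral_exp_kernel_eq {s r : ℝ} (hs : 0 < s) (hr : 0 < r) :
    (∫⁻ t in Ioi (0 : ℝ), ENNReal.ofReal (Real.exp (-r * t) * (t ^ (s - 1) / Real.Gamma s)))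
      = ENNReal.ofReal ((1 / r) ^ s) := by
  have hΓ : 0 < Real.Gamma s := Real.Gamma_pos_of_pos hs
  have hint : IntegrableOn
      (fun t : ℝ => Real.exp (-r * t) * (t ^ (s - 1) / Real.Gamma s)) (Ioi 0) := by
    have h2 : IntegrableOn
        (fun t : ℝ => t ^ (s - 1) * Real.exp (-(r * t)) * (Real.Gamma s)⁻¹) (Ioi 0) :=
      (integrableOn_rpow_mul_exp_neg_mul_aux hs hr).mul_const (Real.Gamma s)⁻¹
    refine h2.congr_fun (fun t ht => ?_) measurableSet_Ioi
    rw [div_eq_mul_inv, neg_mul]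
    ring
  have hnn : 0 ≤ᵐ[volume.restrict (Ioi (0:ℝ))]
      fun t : ℝ => Real.exp (-r * t) * (t ^ (s - 1) / Real.Gamma s) := by
    refine (ae_restrict_iff' measurableSet_Ioi).2 (Filter.Eventually.of_forall fun t ht => ?_)
    exact mul_nonneg (Real.exp_pos _).le
      (div_nonneg (Real.rpow_nonneg (le_of_lt ht) _) hΓ.le)
  rw [← ofReal_integral_eq_lintegral_ofReal hint hnn]
  congr 1
  have : (∫ t in Ioi (0:ℝ), Real.exp (-r * t) * (t ^ (s - 1) / Real.Gamma s))
      = (∫ t in Ioi (0:ℝ), t ^ (s - 1) * Real.exp (-(r * t))) * (Real.Gamma s)⁻¹ := by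
    rw [← integral_mul_const]
    refine setIntegral_congr_fun measurableSet_Ioi (fun t ht => ?_)
    rw [div_eq_mul_inv, neg_mul]
    ring
  rw [this, Real.integral_rpow_mul_exp_neg_mul_Ioi hs hr, mul_assoc,
    mul_inv_cancel₀ hΓ.ne', mul_one]

/-- For every `ε > 0` there is `ν > 1` with `∫₀^∞ e^{-νt} 𝓘(t) dt < ε`; in particular this
integral is finite for such `ν`. -/
theorem exists_laplace_volterraI_lt (ε : ℝ) (hε : 0 < ε) :
    ∃ ν : ℝ, 1 < ν ∧
      (∫⁻ t in Set.Ioi (0 : ℝ), ENNReal.ofReal (Real.exp (-ν * t) * volterraI t))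
        < ENNReal.ofReal ε ∧
      (∫⁻ t in Set.Ioi (0 : ℝ), ENNReal.ofReal (Real.exp (-ν * t) * volterraI t)) < ⊤ := by
  set c : ℝ := 2 / ε with hc_def
  have hc : 0 < c := by positivity
  refine ⟨Real.exp c, Real.one_lt_exp_iff.2 hc, ?_⟩
  set ν : ℝ := Real.exp c with hν_def
  have hν0 : 0 < ν := Real.exp_pos c
  have hcont : ContinuousOn
      (fun p : ℝ × ℝ => Real.exp (-ν * p.1) * (p.1 ^ (p.2 - 1) / Real.Gamma p.2))
      (Ioi 0 ×ˢ Ioi 0) := by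
    intro p hp
    have hp1 : (0:ℝ) < p.1 := hp.1
    have hp2 : (0:ℝ) < p.2 := hp.2
    have h1 : ContinuousAt (fun p : ℝ × ℝ => Real.exp (-ν * p.1)) p :=
      (Real.continuous_exp.comp ((continuous_const.mul continuous_fst))).continuousAt
    have h2 : ContinuousAt (fun p : ℝ × ℝ => p.1 ^ (p.2 - 1)) p := by
      have h := Real.continuousAt_rpow (p.1, p.2 - 1) (Or.inl hp1.ne')
      have hg : ContinuousAt (fun q : ℝ × ℝ => (q.1, q.2 - 1)) p :=
        (continuous_fst.prodMk (continuous_snd.sub continuous_const)).continuousAt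
      exact ContinuousAt.comp (f := fun q : ℝ × ℝ => (q.1, q.2 - 1)) h hg
    have h3 : ContinuousAt (fun p : ℝ × ℝ => Real.Gamma p.2) p := by
      have hne : ∀ m : ℕ, p.2 ≠ -m := fun m =>
        ((lt_of_le_of_lt (neg_nonpos.2 (Nat.cast_nonneg m)) hp2).ne').symm ∘ Eq.symm
      exact (Real.differentiableAt_Gamma hne).continuousAt.comp continuous_snd.continuousAt
    exact ((h1.mul (h2.div h3 (Real.Gamma_pos_of_pos hp2).ne')).continuousWithinAt)
  have hmeas : AEMeasurable
      (Function.uncurry fun t s : ℝ =>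
        ENNReal.ofReal (Real.exp (-ν * t) * (t ^ (s - 1) / Real.Gamma s)))
      ((volume.restrict (Ioi (0:ℝ))).prod (volume.restrict (Ioi (0:ℝ)))) := by
    rw [Measure.prod_restrict]
    exact (ENNReal.continuous_ofReal.comp_continuousOn hcont).aemeasurable
      (measurableSet_Ioi.prod measurableSet_Ioi)
  have key : (∫⁻ t in Ioi (0:ℝ), ENNReal.ofReal (Real.exp (-ν * t) * volterraI t))
      ≤ ENNReal.ofReal (ε / 2) := by
    calc (∫⁻ t in Ioi (0:ℝ), ENNReal.ofReal (Real.exp (-ν * t) * volterraI t))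
        ≤ ∫⁻ t in Ioi (0:ℝ), ∫⁻ s in Ioi (0:ℝ),
            ENNReal.ofReal (Real.exp (-ν * t) * (t ^ (s - 1) / Real.Gamma s)) := by
          refine lintegral_mono_ae ((ae_restrict_iff' measurableSet_Ioi).2
            (Filter.Eventually.of_forall fun t ht => ?_))
          have heq : Real.exp (-ν * t) * volterraI t
              = ∫ s in Ioi (0:ℝ), Real.exp (-ν * t) * (t ^ (s - 1) / Real.Gamma s) := by
            rw [volterraI, integral_const_mul]
          rw [heq]
          by_cases hint : IntegrableOn
              (fun s : ℝ => Real.exp (-ν * t) * (t ^ (s - 1) / Real.Gamma s)) (Ioi 0)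
          · have hnn : 0 ≤ᵐ[volume.restrict (Ioi (0:ℝ))]
                fun s : ℝ => Real.exp (-ν * t) * (t ^ (s - 1) / Real.Gamma s) := by
              refine (ae_restrict_iff' measurableSet_Ioi).2
                (Filter.Eventually.of_forall fun s hs => ?_)
              exact mul_nonneg (Real.exp_pos _).le (div_nonneg
                (Real.rpow_nonneg (le_of_lt ht) _) (Real.Gamma_pos_of_pos hs).le)
            rw [ofReal_integral_eq_lintegral_ofReal hint hnn]
          · rw [integral_undef hint]
            simp
      _ = ∫⁻ s in Ioi (0:ℝ), ∫⁻ t in Ioi (0:ℝ),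
            ENNReal.ofReal (Real.exp (-ν * t) * (t ^ (s - 1) / Real.Gamma s)) :=
          lintegral_lintegral_swap hmeas
      _ = ∫⁻ s in Ioi (0:ℝ), ENNReal.ofReal ((1 / ν) ^ s) := by
          refine setLIntegral_congr_fun measurableSet_Ioi
            (fun s hs => ?_)
          exact lintegral_exp_kernel_eq hs hν0
      _ = ∫⁻ s in Ioi (0:ℝ), ENNReal.ofReal
            (Real.exp (-c * s) * (s ^ ((1:ℝ) - 1) / Real.Gamma 1)) := by
          refine setLIntegral_congr_fun measurableSet_Ioi
            (fun s hs => ?_)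
          rw [Real.Gamma_one, sub_self, Real.rpow_zero]
          rw [one_div, ← Real.exp_neg, ← Real.exp_mul, neg_mul]
          norm_num
      _ = ENNReal.ofReal ((1 / c) ^ (1:ℝ)) := lintegral_exp_kernel_eq one_pos hc
      _ = ENNReal.ofReal (ε / 2) := by
          rw [Real.rpow_one, hc_def, one_div_div]
  have hlt : (∫⁻ t in Ioi (0:ℝ), ENNReal.ofReal (Real.exp (-ν * t) * volterraI t))
      < ENNReal.ofReal ε :=
    lt_of_le_of_lt key ((ENNReal.ofReal_lt_ofReal_iff hε).2 (by linarith))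
  exact ⟨hlt, hlt.trans_le le_top⟩
end

section
/- Let α₀ ∈ ℝ∖{0} and ω > 0, and let p ∈ ℂ with Re(p) < 0 and Im(p) ∈ [0,ω] be such that log(p + iωn) + 4πβ₀ ≠ 0 for all n ∈ ℤ. If ξ = (ξₙ)_{n∈ℤ} ∈ ℓ²(ℤ;ℂ) is not identically zero and satisfies ξₙ = −α₀ h(p + iωn)(ξ_{n+1} − ξ_{n−1}) for every n ∈ ℤ, then ξₙ ≠ 0 for every n ∈ ℤ. -/
open MeasureTheory

/-- `β₀ := (γ - log 2)/(2π) - i/8`, with `γ` the Euler–Mascheroni constant. -/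
noncomputable def beta0 : ℂ :=
  (((Real.eulerMascheroniConstant - Real.log 2) / (2 * Real.pi) : ℝ) : ℂ) - Complex.I / 8

/-- `h(z) := 2πi / (log z + 4πβ₀)`, with the principal branch of the complex logarithm. -/
noncomputable def hfun (z : ℂ) : ℂ :=
  2 * (Real.pi : ℂ) * Complex.I / (Complex.log z + 4 * (Real.pi : ℂ) * beta0)

/-- In the open left half plane with nonnegative imaginary part, `arg > π/2`. -/
lemma aux_arg_gt (z : ℂ) (hre : z.re < 0) (him : 0 ≤ z.im) :
    Real.pi / 2 < Complex.arg z := by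
  have hz : z ≠ 0 := fun h => by simp [h] at hre
  have hcos : Real.cos (Complex.arg z) < 0 := by
    rw [Complex.cos_arg hz]
    exact div_neg_of_neg_of_pos hre (norm_pos_iff.mpr hz)
  by_contra h
  push_neg at h
  have h0 : 0 ≤ Complex.arg z := Complex.arg_nonneg_iff.mpr him
  have := Real.cos_nonneg_of_mem_Icc ⟨by linarith [Real.pi_pos], h⟩
  linarith

/-- In the open left half plane with negative imaginary part, `arg < -π/2`. -/
lemma aux_arg_lt (z : ℂ) (hre : z.re < 0) (him : z.im < 0) :
    Complex.arg z < -(Real.pi / 2) := by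
  have hz : z ≠ 0 := fun h => by simp [h] at hre
  have hcos : Real.cos (Complex.arg z) < 0 := by
    rw [Complex.cos_arg hz]
    exact div_neg_of_neg_of_pos hre (norm_pos_iff.mpr hz)
  by_contra h
  push_neg at h
  have h0 : Complex.arg z < 0 := Complex.arg_neg_iff.mpr him
  have := Real.cos_nonneg_of_mem_Icc ⟨h, by linarith [Real.pi_pos]⟩
  linarith

/-- Two consecutive zeros of the three-term recurrence force the zero solution. -/
lemma aux_all_zero (ξ : ℤ → ℂ) (d : ℤ → ℂ)
    (hrec : ∀ n : ℤ, ξ (n + 1) = ξ (n - 1) + d n * ξ n)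
    (m : ℤ) (h1 : ξ m = 0) (h2 : ξ (m + 1) = 0) : ∀ n : ℤ, ξ n = 0 := by
  have fwd : ∀ k : ℕ, ξ (m + k) = 0 ∧ ξ (m + k + 1) = 0 := by
    intro k
    induction k with
    | zero => simpa using ⟨h1, h2⟩
    | succ k ih =>
      have e1 : m + (k + 1 : ℕ) = m + k + 1 := by push_cast; ring
      have e2 : m + (k + 1 : ℕ) + 1 = (m + k + 1) + 1 := by push_cast; ring
      refine ⟨by rw [e1]; exact ih.2, ?_⟩
      rw [e2, hrec (m + k + 1)]
      have e3 : m + k + 1 - 1 = m + k := by ring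
      rw [e3, ih.1, ih.2]
      ring
  have bwd : ∀ k : ℕ, ξ (m - k) = 0 ∧ ξ (m - k + 1) = 0 := by
    intro k
    induction k with
    | zero => simpa using ⟨h1, h2⟩
    | succ k ih =>
      have e1 : m - (k + 1 : ℕ) = (m - k) - 1 := by push_cast; ring
      have e2 : m - (k + 1 : ℕ) + 1 = m - k := by push_cast; ring
      constructor
      · rw [e1]
        have := hrec (m - k)
        rw [ih.2, ih.1] at this
        have : (0 : ℂ) = ξ (m - k - 1) + 0 := by simpa using this
        simpa using this.symm
      · rw [e2]; exact ih.1
  intro n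
  rcases le_or_gt m n with h | h
  · have : n = m + ((n - m).toNat : ℤ) := by
      rw [Int.toNat_of_nonneg (by omega)]; ring
    rw [this]; exact (fwd (n - m).toNat).1
  · have : n = m - ((m - n).toNat : ℤ) := by
      rw [Int.toNat_of_nonneg (by omega)]; ring
    rw [this]; exact (bwd (m - n).toNat).1

/-- A function on `ℤ` which is nondecreasing on `(-∞, t]`, tends to `0` at `-∞`,
and vanishes at some `n₀ ≤ t`, vanishes on all of `(-∞, n₀]`. -/
lemma aux_zero_below (f : ℤ → ℝ) (t n₀ : ℤ)
    (hb : Filter.Tendsto f Filter.atBot (nhds 0))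
    (hg : ∀ n : ℤ, n ≤ t → f (n - 1) ≤ f n)
    (hn₀ : n₀ ≤ t) (hf0 : f n₀ = 0) : ∀ m : ℤ, m ≤ n₀ → f m = 0 := by
  have mono : ∀ b : ℤ, b ≤ t → ∀ k : ℕ, f (b - k) ≤ f b := by
    intro b hb' k
    induction k with
    | zero => simp
    | succ k ih =>
      have e1 : b - ((k + 1 : ℕ) : ℤ) = (b - k) - 1 := by push_cast; ring
      have h1 : f ((b - k) - 1) ≤ f (b - k) := hg (b - k) (by omega)
      rw [e1]
      exact h1.trans ih
  have mono' : ∀ a b : ℤ, a ≤ b → b ≤ t → f a ≤ f b := by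
    intro a b hab hbt
    have : a = b - ((b - a).toNat : ℤ) := by
      rw [Int.toNat_of_nonneg (by omega)]; ring
    rw [this]; exact mono b hbt (b - a).toNat
  intro m hm
  have h1 : f m ≤ 0 := hf0 ▸ mono' m n₀ hm hn₀
  have h2 : 0 ≤ f m := by
    refine le_of_tendsto hb ?_
    exact Filter.eventually_atBot.mpr ⟨m, fun j hj => mono' j m hj (hm.trans hn₀)⟩
  linarith

/-- A function on `ℤ` which is nonincreasing on `[t, ∞)`, tends to `0` at `+∞`,
and vanishes at some `n₀ ≥ t`, vanishes on all of `[n₀, ∞)`. -/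
lemma aux_zero_above (f : ℤ → ℝ) (t n₀ : ℤ)
    (hb : Filter.Tendsto f Filter.atTop (nhds 0))
    (hg : ∀ n : ℤ, t < n → f n ≤ f (n - 1))
    (hn₀ : t ≤ n₀) (hf0 : f n₀ = 0) : ∀ m : ℤ, n₀ ≤ m → f m = 0 := by
  have mono : ∀ b : ℤ, t ≤ b → ∀ k : ℕ, f (b + k) ≤ f b := by
    intro b hb' k
    induction k with
    | zero => simp
    | succ k ih =>
      have e1 : b + ((k + 1 : ℕ) : ℤ) = (b + k + 1) := by push_cast; ring
      have h1 : f (b + k + 1) ≤ f (b + k) := by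
        have := hg (b + k + 1) (by omega)
        simpa using this
      rw [e1]
      exact h1.trans ih
  have mono' : ∀ a b : ℤ, a ≤ b → t ≤ a → f b ≤ f a := by
    intro a b hab hta
    have : b = a + ((b - a).toNat : ℤ) := by
      rw [Int.toNat_of_nonneg (by omega)]; ring
    rw [this]; exact mono a hta (b - a).toNat
  intro m hm
  have h1 : f m ≤ 0 := hf0 ▸ mono' n₀ m hm hn₀
  have h2 : 0 ≤ f m := by
    refine le_of_tendsto hb ?_
    exact Filter.eventually_atTop.mpr ⟨m, fun j hj => mono' m j hj (hn₀.trans hm)⟩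
  linarith

/-- If `p` has `Re p < 0`, `Im p ∈ [0,ω]`, `log(p + iωn) + 4πβ₀ ≠ 0` for all `n`, and
`ξ ∈ ℓ²(ℤ;ℂ)` is a nonzero solution of `ξₙ = -α₀ h(p+iωn)(ξ_{n+1} - ξ_{n-1})`, then
`ξₙ ≠ 0` for every `n`. -/
theorem nonzero_solution_has_no_zero_entry (α₀ ω : ℝ) (hα : α₀ ≠ 0) (hω : 0 < ω)
    (p : ℂ) (hre : p.re < 0) (him : p.im ∈ Set.Icc 0 ω)
    (hlog : ∀ n : ℤ,
      Complex.log (p + Complex.I * (ω : ℂ) * (n : ℂ)) + 4 * (Real.pi : ℂ) * beta0 ≠ 0)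
    (ξ : ℤ → ℂ) (hξ2 : Memℓp ξ 2) (hξ0 : ξ ≠ 0)
    (heq : ∀ n : ℤ, ξ n =
      -(α₀ : ℂ) * hfun (p + Complex.I * (ω : ℂ) * (n : ℂ)) * (ξ (n + 1) - ξ (n - 1))) :
    ∀ n : ℤ, ξ n ≠ 0 := by
  intro n₀ hzero
  apply hξ0
  have hπ : (0 : ℝ) < Real.pi := Real.pi_pos
  set L : ℤ → ℂ := fun n =>
    Complex.log (p + Complex.I * (ω : ℂ) * (n : ℂ)) + 4 * (Real.pi : ℂ) * beta0 with hL
  set d : ℤ → ℂ := fun n => (((2 * Real.pi * α₀)⁻¹ : ℝ) : ℂ) * (Complex.I * L n) with hd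
  -- the rearranged recurrence
  have hrec : ∀ n : ℤ, ξ (n + 1) = ξ (n - 1) + d n * ξ n := by
    intro n
    have hde : d n * (-(α₀ : ℂ) * hfun (p + Complex.I * (ω : ℂ) * (n : ℂ))) = 1 := by
      simp only [hd, hfun, hL]
      have hLn : Complex.log (p + Complex.I * (ω : ℂ) * (n : ℂ))
          + 4 * (Real.pi : ℂ) * beta0 ≠ 0 := hlog n
      have hπ' : (Real.pi : ℂ) ≠ 0 := by exact_mod_cast hπ.ne'
      have hα' : (α₀ : ℂ) ≠ 0 := by exact_mod_cast hα
      field_simp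
      ring_nf
      simp [Complex.I_sq]
      try ring
      rw [mul_inv_cancel₀ hπ', one_mul, mul_inv_cancel₀ hα']
    conv_rhs => rw [heq n]
    rw [← mul_assoc, hde, one_mul]
    ring
  -- the (real) Wronskian-type quantity
  set K : ℤ → ℝ := fun n => (ξ (n + 1) * (starRingEnd ℂ) (ξ n)).re with hK
  have hstep : ∀ n : ℤ, K n - K (n - 1) = (d n).re * Complex.normSq (ξ n) := by
    intro n
    have e1 : K n = ((ξ (n - 1) + d n * ξ n) * (starRingEnd ℂ) (ξ n)).re := by
      show (ξ (n + 1) * (starRingEnd ℂ) (ξ n)).re = _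
      rw [hrec n]
    have e2 : K (n - 1) = (ξ n * (starRingEnd ℂ) (ξ (n - 1))).re := by
      show (ξ (n - 1 + 1) * (starRingEnd ℂ) (ξ (n - 1))).re = _
      rw [sub_add_cancel]
    have e3 : (ξ (n - 1) + d n * ξ n) * (starRingEnd ℂ) (ξ n)
          - ξ n * (starRingEnd ℂ) (ξ (n - 1))
        = d n * ((Complex.normSq (ξ n) : ℝ) : ℂ)
          + (ξ (n - 1) * (starRingEnd ℂ) (ξ n)
             - (starRingEnd ℂ) (ξ (n - 1) * (starRingEnd ℂ) (ξ n))) := by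
      rw [map_mul, Complex.conj_conj, ← Complex.mul_conj]
      ring
    have e4 : K n - K (n - 1) = ((ξ (n - 1) + d n * ξ n) * (starRingEnd ℂ) (ξ n)
        - ξ n * (starRingEnd ℂ) (ξ (n - 1))).re := by rw [Complex.sub_re, e1, e2]
    rw [e4, e3, Complex.add_re, Complex.sub_re, Complex.conj_re, sub_self, add_zero]
    simp [Complex.mul_re]
  -- real part of d
  have hdre : ∀ n : ℤ, (d n).re = (2 * Real.pi * α₀)⁻¹ * (-(L n).im) := by
    intro n
    show ((((2 * Real.pi * α₀)⁻¹ : ℝ) : ℂ) * (Complex.I * L n)).re = _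
    simp [Complex.mul_re, Complex.mul_im]
  -- imaginary part of L
  have hbim : beta0.im = -(1 / 8 : ℝ) := by
    rw [beta0, Complex.sub_im, Complex.ofReal_im]
    norm_num [Complex.div_im, Complex.normSq]
  have h4pi : (4 * (Real.pi : ℂ) * beta0).im = -(Real.pi / 2) := by
    have h1 : (4 * (Real.pi : ℂ)).im = 0 := by simp
    have h2 : (4 * (Real.pi : ℂ)).re = 4 * Real.pi := by simp
    rw [Complex.mul_im, h1, h2, hbim]
    ring
  have hLim : ∀ n : ℤ,
      (L n).im = Complex.arg (p + Complex.I * (ω : ℂ) * (n : ℂ)) - Real.pi / 2 := by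
    intro n
    rw [hL]
    simp only [Complex.add_im, Complex.log_im, h4pi]
    ring
  have hzre : ∀ n : ℤ, (p + Complex.I * (ω : ℂ) * (n : ℂ)).re = p.re := by
    intro n; simp
  have hzim : ∀ n : ℤ, (p + Complex.I * (ω : ℂ) * (n : ℂ)).im = p.im + ω * n := by
    intro n; simp
  -- sign of Im L
  have hLpos : ∀ n : ℤ, 0 ≤ p.im + ω * n → 0 < (L n).im := by
    intro n hn
    rw [hLim n]
    have := aux_arg_gt _ (by rw [hzre n]; exact hre) (by rw [hzim n]; exact hn)
    linarith
  have hLneg : ∀ n : ℤ, p.im + ω * n < 0 → (L n).im < 0 := by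
    intro n hn
    rw [hLim n]
    have := aux_arg_lt _ (by rw [hzre n]; exact hre) (by rw [hzim n]; exact hn)
    linarith
  obtain ⟨him0, him1⟩ := him
  -- the threshold t : Im L < 0 for n ≤ t, Im L > 0 for n ≥ t+1
  set t : ℤ := if 0 ≤ p.im + ω * (-1 : ℤ) then (-2 : ℤ) else -1 with ht
  have htneg : ∀ n : ℤ, n ≤ t → (L n).im < 0 := by
    intro n hn
    apply hLneg
    by_cases hc : 0 ≤ p.im + ω * (-1 : ℤ)
    · rw [ht, if_pos hc] at hn
      -- n ≤ -2
      have : ω * n ≤ ω * (-2 : ℤ) := by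
        apply mul_le_mul_of_nonneg_left _ hω.le
        exact_mod_cast hn
      push_cast at this ⊢
      nlinarith
    · rw [ht, if_neg hc] at hn
      push_neg at hc
      -- n ≤ -1
      have : ω * n ≤ ω * (-1 : ℤ) := by
        apply mul_le_mul_of_nonneg_left _ hω.le
        exact_mod_cast hn
      push_cast at this hc ⊢
      nlinarith
  have htpos : ∀ n : ℤ, t < n → 0 < (L n).im := by
    intro n hn
    by_cases hc : 0 ≤ p.im + ω * (-1 : ℤ)
    · rw [ht, if_pos hc] at hn
      -- n ≥ -1
      apply hLpos
      have : ω * (-1 : ℤ) ≤ ω * n := by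
        apply mul_le_mul_of_nonneg_left _ hω.le
        exact_mod_cast hn
      push_cast at this hc ⊢
      nlinarith
    · rw [ht, if_neg hc] at hn
      -- n ≥ 0
      apply hLpos
      have h0 : (0 : ℤ) ≤ n := by omega
      have : (0 : ℝ) ≤ ω * n := by
        apply mul_nonneg hω.le
        exact_mod_cast h0
      nlinarith
  -- ξ tends to 0 at ±∞
  have hsum : Summable fun n : ℤ => ‖ξ n‖ ^ (2 : ℝ) := by
    have := hξ2.summable (p := 2) (by norm_num)
    simpa using this
  have htend : Filter.Tendsto ξ Filter.cofinite (nhds 0) := by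
    have h1 : Filter.Tendsto (fun n : ℤ => ‖ξ n‖ ^ (2 : ℝ)) Filter.cofinite (nhds 0) :=
      hsum.tendsto_cofinite_zero
    have h2 : Filter.Tendsto (fun n : ℤ => ‖ξ n‖) Filter.cofinite (nhds 0) := by
      have h3 := (Real.continuous_sqrt.tendsto 0).comp h1
      simp only [Function.comp_def, Real.sqrt_zero] at h3
      refine h3.congr fun n => ?_
      rw [show ‖ξ n‖ ^ (2 : ℝ) = ‖ξ n‖ ^ (2 : ℕ) by
        rw [← Real.rpow_natCast]; norm_num]
      exact Real.sqrt_sq (norm_nonneg _)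
    exact tendsto_zero_iff_norm_tendsto_zero.mpr h2
  have hcof : Filter.Tendsto ξ Filter.atTop (nhds 0) ∧
      Filter.Tendsto ξ Filter.atBot (nhds 0) := by
    rw [Int.cofinite_eq] at htend
    exact ⟨htend.mono_left le_sup_right, htend.mono_left le_sup_left⟩
  have hKtend : ∀ l : Filter ℤ, Filter.Tendsto ξ l (nhds 0) →
      Filter.Tendsto (fun n : ℤ => ξ (n + 1)) l Filter.cofinite →
      True := fun _ _ _ => trivial
  have hKlim : ∀ (fl : Filter ℤ), Filter.Tendsto ξ fl (nhds 0) →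
      Filter.Tendsto (fun n => ξ (n + 1)) fl (nhds 0) →
      Filter.Tendsto K fl (nhds 0) := by
    intro fl h1 h2
    have hmul : Filter.Tendsto (fun n => ξ (n + 1) * (starRingEnd ℂ) (ξ n)) fl (nhds 0) := by
      have hconj : Filter.Tendsto (fun n => (starRingEnd ℂ) (ξ n)) fl (nhds 0) := by
        have := (continuous_star.tendsto (0 : ℂ)).comp h1
        simpa [Function.comp_def] using this
      simpa using h2.mul hconj
    have := (Complex.continuous_re.tendsto 0).comp hmul
    simpa [Function.comp_def, hK] using this
  have hshift_top : Filter.Tendsto (fun n : ℤ => ξ (n + 1)) Filter.atTop (nhds 0) :=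
    hcof.1.comp (Filter.tendsto_atTop_add_const_right _ 1 Filter.tendsto_id)
  have hshift_bot : Filter.Tendsto (fun n : ℤ => ξ (n + 1)) Filter.atBot (nhds 0) :=
    hcof.2.comp (Filter.tendsto_atBot_add_const_right _ 1 Filter.tendsto_id)
  have hKtop : Filter.Tendsto K Filter.atTop (nhds 0) := hKlim _ hcof.1 hshift_top
  have hKbot : Filter.Tendsto K Filter.atBot (nhds 0) := hKlim _ hcof.2 hshift_bot
  -- signed version
  set s : ℝ := if 0 < α₀ then 1 else -1 with hs
  set F : ℤ → ℝ := fun n => s * K n with hF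
  set q : ℝ := s * (2 * Real.pi * α₀)⁻¹ with hq
  have hqpos : 0 < q := by
    rw [hq, hs]
    rcases lt_or_gt_of_ne hα with h | h
    · rw [if_neg (by linarith)]
      have h2' : (2 * Real.pi * α₀) < 0 := by nlinarith
      have h3' : (2 * Real.pi * α₀)⁻¹ < 0 := inv_lt_zero.mpr h2'
      linarith
    · rw [if_pos h]
      have : (0:ℝ) < 2 * Real.pi * α₀ := by nlinarith
      have := inv_pos.mpr this
      linarith
  have hFstep : ∀ n : ℤ, F n - F (n - 1) = q * (-(L n).im) * Complex.normSq (ξ n) := by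
    intro n
    rw [hF]
    simp only
    rw [← mul_sub, hstep n, hdre n, hq]
    ring
  have hFtop : Filter.Tendsto F Filter.atTop (nhds 0) := by
    have h := hKtop.const_mul s
    rw [mul_zero] at h
    exact h
  have hFbot : Filter.Tendsto F Filter.atBot (nhds 0) := by
    have h := hKbot.const_mul s
    rw [mul_zero] at h
    exact h
  have hF0 : F n₀ = 0 := by
    rw [hF, hK]
    simp [hzero]
  -- the increments of F are ≥ 0 below t and ≤ 0 above t
  have hgincr : ∀ n : ℤ, n ≤ t → F (n - 1) ≤ F n := by
    intro n hn
    have h1 := hFstep n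
    have h2 : 0 ≤ q * (-(L n).im) * Complex.normSq (ξ n) := by
      apply mul_nonneg
      · apply mul_nonneg hqpos.le
        have := htneg n hn
        linarith
      · exact Complex.normSq_nonneg _
    linarith
  have hgdecr : ∀ n : ℤ, t < n → F n ≤ F (n - 1) := by
    intro n hn
    have h1 := hFstep n
    have h2 : q * (-(L n).im) * Complex.normSq (ξ n) ≤ 0 := by
      apply mul_nonpos_of_nonpos_of_nonneg
      · apply mul_nonpos_of_nonneg_of_nonpos hqpos.le
        have := htpos n hn
        linarith
      · exact Complex.normSq_nonneg _
    linarith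
  -- conclude a neighbor of n₀ is also zero
  have hconsec : ∃ m : ℤ, ξ m = 0 ∧ ξ (m + 1) = 0 := by
    rcases le_or_gt n₀ t with hcase | hcase
    · -- F vanishes on (-∞, n₀]
      have hvan := aux_zero_below F t n₀ hFbot hgincr hcase hF0
      have hξvan : ξ (n₀ - 1) = 0 := by
        have h1 : F (n₀ - 1) = 0 := hvan _ (by omega)
        have h2 : F (n₀ - 1 - 1) = 0 := hvan _ (by omega)
        have h3 := hFstep (n₀ - 1)
        rw [h1, h2] at h3
        have h6 : 0 < q * (-(L (n₀ - 1)).im) :=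
          mul_pos hqpos (by linarith [htneg (n₀ - 1) (show n₀ - 1 ≤ t by omega)])
        have h5 : Complex.normSq (ξ (n₀ - 1)) = 0 := by
          by_contra hcon
          have hpos2 : 0 < Complex.normSq (ξ (n₀ - 1)) :=
            lt_of_le_of_ne (Complex.normSq_nonneg _) (Ne.symm hcon)
          nlinarith
        exact Complex.normSq_eq_zero.mp h5
      exact ⟨n₀ - 1, hξvan, by simpa using hzero⟩
    · -- F vanishes on [n₀, ∞)
      have hvan := aux_zero_above F t n₀ hFtop hgdecr hcase.le hF0
      have hξvan : ξ (n₀ + 1) = 0 := by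
        have h1 : F (n₀ + 1) = 0 := hvan _ (by omega)
        have h2 : F (n₀ + 1 - 1) = 0 := hvan _ (by omega)
        have h3 := hFstep (n₀ + 1)
        rw [h1, h2] at h3
        have hL1 : 0 < (L (n₀ + 1)).im := htpos (n₀ + 1) (by omega)
        have h6 : q * (-(L (n₀ + 1)).im) < 0 := by nlinarith
        have h5 : Complex.normSq (ξ (n₀ + 1)) = 0 := by
          by_contra hcon
          have hpos2 : 0 < Complex.normSq (ξ (n₀ + 1)) :=
            lt_of_le_of_ne (Complex.normSq_nonneg _) (Ne.symm hcon)
          nlinarith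
        exact Complex.normSq_eq_zero.mp h5
      exact ⟨n₀, hzero, hξvan⟩
  obtain ⟨m, hm1, hm2⟩ := hconsec
  funext n
  exact aux_all_zero ξ d hrec m hm1 hm2 n
end

section
/- Let α₀ ∈ ℝ∖{0} and ω > 0. Let θ ∈ (0,ω) be such that log(i(θ + ωn)) + 4πβ₀ ≠ 0 for all n ∈ ℤ, and set p = iθ. Then every ξ = (ξₙ)_{n∈ℤ} ∈ ℓ²(ℤ;ℂ) satisfying ξₙ = −α₀ h(p + iωn)(ξ_{n+1} − ξ_{n−1}) for every n ∈ ℤ is identically zero. -/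
open MeasureTheory

open ComplexConjugate

lemma beta0_im : beta0.im = -(1/8) := by
  rw [beta0]
  simp only [Complex.sub_im, Complex.ofReal_im]
  norm_num [Complex.div_im]

lemma four_pi_beta0_im : ((4 : ℂ) * (Real.pi : ℂ) * beta0).im = -(Real.pi/2) := by
  simp only [Complex.mul_im, Complex.mul_re, Complex.ofReal_re, Complex.ofReal_im, beta0_im]
  norm_num
  ring

/-- For `p = iθ` with `θ ∈ (0,ω)` and `log(i(θ+ωn)) + 4πβ₀ ≠ 0` for all `n`, every
`ξ ∈ ℓ²(ℤ;ℂ)` satisfying `ξₙ = -α₀ h(p+iωn)(ξ_{n+1} - ξ_{n-1})` vanishes identically. -/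
theorem homogeneous_eq_only_trivial_solution_on_imaginary_axis (α₀ ω θ : ℝ)
    (hα : α₀ ≠ 0) (hω : 0 < ω) (hθ : θ ∈ Set.Ioo 0 ω)
    (hlog : ∀ n : ℤ,
      Complex.log (Complex.I * ((θ : ℂ) + (ω : ℂ) * (n : ℂ))) + 4 * (Real.pi : ℂ) * beta0 ≠ 0)
    (ξ : ℤ → ℂ) (hξ2 : Memℓp ξ 2)
    (heq : ∀ n : ℤ, ξ n =
      -(α₀ : ℂ) * hfun (Complex.I * (θ : ℂ) + Complex.I * (ω : ℂ) * (n : ℂ)) *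
        (ξ (n + 1) - ξ (n - 1))) :
    ∀ n : ℤ, ξ n = 0 := by
  obtain ⟨hθ0, hθω⟩ := hθ
  have hπ : (0:ℝ) < Real.pi := Real.pi_pos
  set D : ℤ → ℂ := fun n =>
    Complex.log (Complex.I * ((θ : ℂ) + (ω : ℂ) * (n : ℂ))) + 4 * (Real.pi : ℂ) * beta0
    with hD
  have hDne : ∀ n, D n ≠ 0 := hlog
  have harg : ∀ n : ℤ, Complex.I * (θ : ℂ) + Complex.I * (ω : ℂ) * (n : ℂ)
      = Complex.I * ((θ : ℂ) + (ω : ℂ) * (n : ℂ)) := by intro n; ring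
  -- the pointwise identity after clearing the denominator and multiplying by `conj (ξ n)`
  have key : ∀ n : ℤ, D n * (ξ n * conj (ξ n))
      = (-(α₀:ℂ) * (2 * (Real.pi : ℂ) * Complex.I)) *
        ((ξ (n+1) - ξ (n-1)) * conj (ξ n)) := by
    intro n
    have h2 := heq n
    rw [harg n] at h2
    simp only [hfun] at h2
    have h3 : D n * ξ n
        = -(α₀:ℂ) * (2 * (Real.pi : ℂ) * Complex.I) * (ξ (n+1) - ξ (n-1)) := by
      rw [h2, hD]
      field_simp [hlog n]
    calc D n * (ξ n * conj (ξ n)) = (D n * ξ n) * conj (ξ n) := by ring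
      _ = _ := by rw [h3]; ring
  -- summability of `‖ξ n‖ ^ 2`
  have hS2 : Summable (fun n : ℤ => ‖ξ n‖^2) := by
    have h := hξ2.summable (by norm_num : 0 < (2:ENNReal).toReal)
    have h' : ∀ n : ℤ, ‖ξ n‖ ^ ((2:ENNReal)).toReal = ‖ξ n‖^2 := by
      intro n
      rw [ENNReal.toReal_ofNat, show ((2:ℝ)) = ((2:ℕ):ℝ) by norm_num, Real.rpow_natCast]
    simpa [h'] using h
  have hS2p : Summable (fun n : ℤ => ‖ξ (n+1)‖^2) := by
    have := (Equiv.addRight (1:ℤ)).summable_iff.mpr hS2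
    exact this
  have hS2m : Summable (fun n : ℤ => ‖ξ (n-1)‖^2) := by
    have := (Equiv.subRight (1:ℤ)).summable_iff.mpr hS2
    exact this
  -- summability of the shifted products, via AM-GM
  have prodSummable : ∀ (g : ℤ → ℂ), Summable (fun n : ℤ => ‖g n‖^2) →
      Summable (fun n : ℤ => g n * conj (ξ n)) := by
    intro g hg
    apply Summable.of_norm_bounded ((hg.add hS2).div_const 2)
    intro n
    simp only [norm_mul, RCLike.norm_conj]
    nlinarith [norm_nonneg (g n), norm_nonneg (ξ n), sq_nonneg (‖g n‖ - ‖ξ n‖)]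
  have hA : Summable (fun n : ℤ => ξ (n+1) * conj (ξ n)) := prodSummable _ hS2p
  have hB : Summable (fun n : ℤ => ξ (n-1) * conj (ξ n)) := prodSummable _ hS2m
  have hRHS : Summable (fun n : ℤ =>
      (-(α₀:ℂ) * (2 * (Real.pi : ℂ) * Complex.I)) * ((ξ (n+1) - ξ (n-1)) * conj (ξ n))) := by
    have hfe : (fun n : ℤ =>
        (-(α₀:ℂ) * (2 * (Real.pi : ℂ) * Complex.I)) * ((ξ (n+1) - ξ (n-1)) * conj (ξ n)))
        = fun n : ℤ => (-(α₀:ℂ) * (2 * (Real.pi : ℂ) * Complex.I)) * (ξ (n+1) * conj (ξ n))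
          - (-(α₀:ℂ) * (2 * (Real.pi : ℂ) * Complex.I)) * (ξ (n-1) * conj (ξ n)) := by
      funext n; ring
    rw [hfe]
    exact (hA.mul_left _).sub (hB.mul_left _)
  have hLHS : Summable (fun n : ℤ => D n * (ξ n * conj (ξ n))) := by
    have : (fun n : ℤ => D n * (ξ n * conj (ξ n))) = fun n : ℤ =>
        (-(α₀:ℂ) * (2 * (Real.pi : ℂ) * Complex.I)) * ((ξ (n+1) - ξ (n-1)) * conj (ξ n)) :=
      funext key
    rw [this]; exact hRHS
  -- the backward-shifted sum is the conjugate of the forward-shifted one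
  have hBA : (∑' n : ℤ, ξ (n-1) * conj (ξ n)) = conj (∑' n : ℤ, ξ (n+1) * conj (ξ n)) := by
    rw [Complex.conj_tsum]
    have h1 := (Equiv.addRight (1:ℤ)).tsum_eq (fun n : ℤ => ξ (n-1) * conj (ξ n))
    rw [← h1]
    apply tsum_congr
    intro m
    simp only [Equiv.coe_addRight, add_sub_cancel_right, map_mul, Complex.conj_conj]
    ring
  -- the total sum and its imaginary part
  set A : ℂ := ∑' n : ℤ, ξ (n+1) * conj (ξ n) with hA'
  have hT : (∑' n : ℤ, D n * (ξ n * conj (ξ n)))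
      = (-(α₀:ℂ) * (2 * (Real.pi : ℂ) * Complex.I)) * (A - conj A) := by
    calc (∑' n : ℤ, D n * (ξ n * conj (ξ n)))
        = ∑' n : ℤ, (-(α₀:ℂ) * (2 * (Real.pi : ℂ) * Complex.I)) *
            ((ξ (n+1) - ξ (n-1)) * conj (ξ n)) := tsum_congr key
      _ = ∑' n : ℤ, ((-(α₀:ℂ) * (2 * (Real.pi : ℂ) * Complex.I)) * (ξ (n+1) * conj (ξ n))
            - (-(α₀:ℂ) * (2 * (Real.pi : ℂ) * Complex.I)) * (ξ (n-1) * conj (ξ n))) := by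
          apply tsum_congr; intro n; ring
      _ = (-(α₀:ℂ) * (2 * (Real.pi : ℂ) * Complex.I)) * A
            - (-(α₀:ℂ) * (2 * (Real.pi : ℂ) * Complex.I)) * (∑' n : ℤ, ξ (n-1) * conj (ξ n)) := by
          rw [Summable.tsum_sub (hA.mul_left _) (hB.mul_left _), tsum_mul_left, tsum_mul_left]
      _ = _ := by rw [hBA]; ring
  have hTim : (∑' n : ℤ, D n * (ξ n * conj (ξ n))).im = 0 := by
    rw [hT]
    simp only [Complex.mul_im, Complex.mul_re, Complex.sub_re, Complex.sub_im,
      Complex.conj_re, Complex.conj_im, Complex.I_re, Complex.I_im, Complex.ofReal_re,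
      Complex.ofReal_im, Complex.neg_re, Complex.neg_im, Complex.re_ofNat, Complex.im_ofNat]
    ring
  have him : HasSum (fun n : ℤ => (D n * (ξ n * conj (ξ n))).im) 0 := by
    have h := Complex.hasSum_im hLHS.hasSum
    rwa [hTim] at h
  -- compute the imaginary parts of the terms
  have hterm : ∀ n : ℤ, (D n * (ξ n * conj (ξ n))).im = (D n).im * Complex.normSq (ξ n) := by
    intro n
    rw [Complex.mul_conj]
    simp [Complex.mul_im]
  have hzre : ∀ t : ℝ, (Complex.I * (t : ℂ)).re = 0 := by
    intro t; simp
  have hzim : ∀ t : ℝ, (Complex.I * (t : ℂ)).im = t := by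
    intro t; simp
  have hcast : ∀ n : ℤ, (θ : ℂ) + (ω : ℂ) * (n : ℂ) = ((θ + ω * n : ℝ) : ℂ) := by
    intro n; push_cast; ring
  have hDim0 : ∀ n : ℤ, 0 ≤ n → (D n).im = 0 := by
    intro n hn
    have ht : (0:ℝ) < θ + ω * n := by
      have h1 : (0:ℝ) ≤ (n:ℝ) := by exact_mod_cast hn
      nlinarith
    rw [hD]
    simp only [Complex.add_im, Complex.log_im, hcast n]
    rw [show ((4:ℂ) * (Real.pi : ℂ) * beta0).im = -(Real.pi/2) from four_pi_beta0_im]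
    rw [Complex.arg_eq_pi_div_two_iff.mpr ⟨hzre _, by rw [hzim]; exact ht⟩]
    ring
  have hDimneg : ∀ n : ℤ, n < 0 → (D n).im = -Real.pi := by
    intro n hn
    have ht : θ + ω * n < 0 := by
      have h0 : n ≤ -1 := by omega
      have h1 : (n:ℝ) ≤ -1 := by exact_mod_cast h0
      nlinarith
    rw [hD]
    simp only [Complex.add_im, Complex.log_im, hcast n]
    rw [show ((4:ℂ) * (Real.pi : ℂ) * beta0).im = -(Real.pi/2) from four_pi_beta0_im]
    rw [Complex.arg_eq_neg_pi_div_two_iff.mpr ⟨hzre _, by rw [hzim]; exact ht⟩]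
    ring
  -- the terms are nonpositive, so each must vanish
  have him' : HasSum (fun n : ℤ => (D n).im * Complex.normSq (ξ n)) 0 := by
    have : (fun n : ℤ => (D n * (ξ n * conj (ξ n))).im)
        = fun n : ℤ => (D n).im * Complex.normSq (ξ n) := funext hterm
    rwa [this] at him
  have hzero : ∀ n : ℤ, -((D n).im * Complex.normSq (ξ n)) = 0 := by
    have hnn : ∀ n : ℤ, 0 ≤ -((D n).im * Complex.normSq (ξ n)) := by
      intro n
      rcases lt_or_ge n 0 with h | h
      · rw [hDimneg n h]
        have := Complex.normSq_nonneg (ξ n)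
        nlinarith
      · rw [hDim0 n h]; simp
    have h0 : HasSum (fun n : ℤ => -((D n).im * Complex.normSq (ξ n))) 0 := by
      simpa using him'.neg
    have := (hasSum_zero_iff_of_nonneg hnn).mp h0
    intro n; exact congrFun this n
  have hneg : ∀ n : ℤ, n < 0 → ξ n = 0 := by
    intro n hn
    have h := hzero n
    rw [hDimneg n hn] at h
    have h2 : Real.pi * Complex.normSq (ξ n) = 0 := by linear_combination h
    rcases mul_eq_zero.mp h2 with h' | h'
    · exact absurd h' hπ.ne'
    · exact Complex.normSq_eq_zero.mp h'
  -- the coefficient in the recurrence is nonzero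
  have hfne : ∀ n : ℤ,
      -(α₀:ℂ) * hfun (Complex.I * (θ : ℂ) + Complex.I * (ω : ℂ) * (n : ℂ)) ≠ 0 := by
    intro n
    apply mul_ne_zero
    · simpa using hα
    · rw [harg n]
      simp only [hfun]
      apply div_ne_zero
      · simp [Complex.ext_iff, hπ.ne']
      · exact hlog n
  have hstep : ∀ n : ℤ, ξ n = 0 → ξ (n-1) = 0 → ξ (n+1) = 0 := by
    intro n h0 hm
    have h := heq n
    rw [h0, hm, sub_zero] at h
    exact (mul_eq_zero.mp h.symm).resolve_left (hfne n)
  have hnat : ∀ k : ℕ, ξ ((k:ℤ) - 1) = 0 ∧ ξ (k:ℤ) = 0 := by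
    intro k
    induction k with
    | zero =>
      refine ⟨hneg _ (by omega), ?_⟩
      have := hstep (-1) (hneg (-1) (by omega)) (hneg (-1-1) (by omega))
      simpa using this
    | succ k ih =>
      constructor
      · have : ((k+1:ℕ):ℤ) - 1 = (k:ℤ) := by push_cast; ring
        rw [this]; exact ih.2
      · have := hstep (k:ℤ) ih.2 ih.1
        have hc : ((k+1:ℕ):ℤ) = (k:ℤ) + 1 := by push_cast; ring
        rw [hc]; exact this
  intro n
  rcases lt_or_ge n 0 with h | h
  · exact hneg n h
  · obtain ⟨k, rfl⟩ := Int.eq_ofNat_of_zero_le h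
    exact (hnat k).2
end

section
/- Let α₀ ∈ ℝ∖{0} and ω > 0, and let p ∈ ℂ be such that p + iωn ≠ 0 and log(p + iωn) + 4πβ₀ ≠ 0 for all n ∈ ℤ. Then 𝓛(α₀,p) is a compact operator on ℓ²(ℤ;ℂ). -/
open MeasureTheory

set_option maxHeartbeats 4000000

namespace LopAux

open Filter Topology

lemma summable_aux {D : ℝ} {c : ℤ → ℂ} (hD : ∀ n, ‖c n‖ ≤ D) (k : ℤ)
    (u : lp (fun _ : ℤ => ℂ) 2) :
    Summable (fun n : ℤ => ‖c n * (u : ∀ _ : ℤ, ℂ) (n + k)‖ ^ (2:ℝ)) := by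
  have hD0 : 0 ≤ D := le_trans (norm_nonneg _) (hD 0)
  have hu : Summable (fun n : ℤ => ‖(u : ∀ _ : ℤ, ℂ) n‖ ^ (2:ℝ)) := by
    have := (lp.memℓp u).summable (p := 2) (by norm_num)
    simpa using this
  have hu' : Summable (fun n : ℤ => ‖(u : ∀ _ : ℤ, ℂ) (n + k)‖ ^ (2:ℝ)) :=
    ((Equiv.addRight k).summable_iff).mpr hu
  refine Summable.of_nonneg_of_le (fun n => by positivity) (fun n => ?_) (hu'.mul_left (D ^ (2:ℝ)))
  rw [norm_mul, ← Real.mul_rpow hD0 (norm_nonneg _)]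
  exact Real.rpow_le_rpow (by positivity)
    (mul_le_mul_of_nonneg_right (hD n) (norm_nonneg _)) (by norm_num)

lemma tsum_aux {D : ℝ} {c : ℤ → ℂ} (hD : ∀ n, ‖c n‖ ≤ D) (k : ℤ)
    (u : lp (fun _ : ℤ => ℂ) 2) :
    ∑' n : ℤ, ‖c n * (u : ∀ _ : ℤ, ℂ) (n + k)‖ ^ (2:ℝ) ≤ (D * ‖u‖) ^ (2:ℝ) := by
  have hD0 : 0 ≤ D := le_trans (norm_nonneg _) (hD 0)
  have hu : Summable (fun n : ℤ => ‖(u : ∀ _ : ℤ, ℂ) n‖ ^ (2:ℝ)) := by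
    have := (lp.memℓp u).summable (p := 2) (by norm_num)
    simpa using this
  have hu' : Summable (fun n : ℤ => ‖(u : ∀ _ : ℤ, ℂ) (n + k)‖ ^ (2:ℝ)) :=
    ((Equiv.addRight k).summable_iff).mpr hu
  have h1 : ∑' n : ℤ, ‖c n * (u : ∀ _ : ℤ, ℂ) (n + k)‖ ^ (2:ℝ)
      ≤ ∑' n : ℤ, D ^ (2:ℝ) * ‖(u : ∀ _ : ℤ, ℂ) (n + k)‖ ^ (2:ℝ) := by
    refine Summable.tsum_le_tsum (fun n => ?_) (summable_aux hD k u) (hu'.mul_left _)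
    rw [norm_mul, ← Real.mul_rpow hD0 (norm_nonneg _)]
    exact Real.rpow_le_rpow (by positivity)
      (mul_le_mul_of_nonneg_right (hD n) (norm_nonneg _)) (by norm_num)
  have h2 : ∑' n : ℤ, ‖(u : ∀ _ : ℤ, ℂ) (n + k)‖ ^ (2:ℝ)
      = ∑' n : ℤ, ‖(u : ∀ _ : ℤ, ℂ) n‖ ^ (2:ℝ) := by
    have := (Equiv.addRight k).tsum_eq (fun n : ℤ => ‖(u : ∀ _ : ℤ, ℂ) n‖ ^ (2:ℝ))
    simpa using this
  have h3 : ∑' n : ℤ, ‖(u : ∀ _ : ℤ, ℂ) n‖ ^ (2:ℝ) = ‖u‖ ^ (2:ℝ) := by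
    have := lp.norm_rpow_eq_tsum (p := 2) (by norm_num) u
    simpa using this.symm
  calc ∑' n : ℤ, ‖c n * (u : ∀ _ : ℤ, ℂ) (n + k)‖ ^ (2:ℝ)
      ≤ ∑' n : ℤ, D ^ (2:ℝ) * ‖(u : ∀ _ : ℤ, ℂ) (n + k)‖ ^ (2:ℝ) := h1
    _ = D ^ (2:ℝ) * ‖u‖ ^ (2:ℝ) := by rw [tsum_mul_left, h2, h3]
    _ = (D * ‖u‖) ^ (2:ℝ) := (Real.mul_rpow hD0 (norm_nonneg _)).symm

variable {C : ℝ} {c : ℤ → ℂ}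

lemma memℓp_aux (hC : ∀ n, ‖c n‖ ≤ C) (k : ℤ) (u : lp (fun _ : ℤ => ℂ) 2) :
    Memℓp (fun n : ℤ => c n * (u : ∀ _ : ℤ, ℂ) (n + k)) 2 := by
  apply memℓp_gen
  simpa using summable_aux hC k u

noncomputable def shiftMulLin (c : ℤ → ℂ) (hC : ∀ n, ‖c n‖ ≤ C) (k : ℤ) :
    lp (fun _ : ℤ => ℂ) 2 →ₗ[ℂ] lp (fun _ : ℤ => ℂ) 2 where
  toFun u := ⟨fun n => c n * (u : ∀ _ : ℤ, ℂ) (n + k), memℓp_aux hC k u⟩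
  map_add' u v := by
    apply lp.ext
    funext n
    simp [mul_add]
    rfl
  map_smul' a u := by
    apply lp.ext
    funext n
    simp
    ring

lemma norm_shiftMulLin_le (hC : ∀ n, ‖c n‖ ≤ C) (k : ℤ) {D : ℝ} (hD : ∀ n, ‖c n‖ ≤ D)
    (u : lp (fun _ : ℤ => ℂ) 2) : ‖shiftMulLin c hC k u‖ ≤ D * ‖u‖ := by
  have hD0 : 0 ≤ D := le_trans (norm_nonneg _) (hD 0)
  apply lp.norm_le_of_tsum_le (p := 2) (by norm_num) (by positivity)
  have := tsum_aux hD k u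
  simpa [shiftMulLin, map_mul] using this

noncomputable def shiftMul (c : ℤ → ℂ) (hC : ∀ n, ‖c n‖ ≤ C) (k : ℤ) :
    lp (fun _ : ℤ => ℂ) 2 →L[ℂ] lp (fun _ : ℤ => ℂ) 2 :=
  LinearMap.mkContinuous (shiftMulLin c hC k) C (norm_shiftMulLin_le hC k hC)

lemma shiftMul_apply (hC : ∀ n, ‖c n‖ ≤ C) (k : ℤ) (u : lp (fun _ : ℤ => ℂ) 2) (n : ℤ) :
    (shiftMul c hC k u : ∀ _ : ℤ, ℂ) n = c n * (u : ∀ _ : ℤ, ℂ) (n + k) := rfl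

lemma norm_shiftMul_le (hC : ∀ n, ‖c n‖ ≤ C) (k : ℤ) {D : ℝ} (hD : ∀ n, ‖c n‖ ≤ D) :
    ‖shiftMul c hC k‖ ≤ D := by
  have hD0 : 0 ≤ D := le_trans (norm_nonneg _) (hD 0)
  exact ContinuousLinearMap.opNorm_le_bound _ hD0 (norm_shiftMulLin_le hC k hD)

lemma shiftMul_sub_shiftMul {C' : ℝ} {c' : ℤ → ℂ} (hC : ∀ n, ‖c n‖ ≤ C)
    (hC' : ∀ n, ‖c' n‖ ≤ C') {C'' : ℝ} (hC'' : ∀ n, ‖c n - c' n‖ ≤ C'') (k : ℤ) :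
    shiftMul c hC k - shiftMul c' hC' k = shiftMul (fun n => c n - c' n) hC'' k := by
  refine ContinuousLinearMap.ext fun u => ?_
  apply lp.ext
  funext n
  have : ((shiftMul c hC k - shiftMul c' hC' k) u : ∀ _ : ℤ, ℂ) n =
      (shiftMul c hC k u : ∀ _ : ℤ, ℂ) n - (shiftMul c' hC' k u : ∀ _ : ℤ, ℂ) n := by
    rw [ContinuousLinearMap.sub_apply, lp.coeFn_sub, Pi.sub_apply]
  rw [this, shiftMul_apply, shiftMul_apply, shiftMul_apply]
  ring

lemma isCompactOperator_of_finiteDimensionalRange {E F : Type*} [NormedAddCommGroup E]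
    [NormedSpace ℂ E] [NormedAddCommGroup F] [NormedSpace ℂ F] (f : E →L[ℂ] F)
    (h : FiniteDimensional ℂ (LinearMap.range (f : E →ₗ[ℂ] F))) : IsCompactOperator f := by
  set V := LinearMap.range (f : E →ₗ[ℂ] F) with hV
  have hVc : IsClosed (V : Set F) := Submodule.closed_of_finiteDimensional V
  let g : E →L[ℂ] V := f.codRestrict V (fun x => LinearMap.mem_range_self _ x)
  have hg : IsCompactOperator g := by
    refine (isCompactOperator_iff_isCompact_closure_image_ball (g : E →ₗ[ℂ] V) zero_lt_one).mpr ?_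
    exact Bornology.IsBounded.isCompact_closure (g.lipschitz.isBounded_image Metric.isBounded_ball)
  have : (f : E → F) = Subtype.val ∘ g := rfl
  rw [this]
  exact hg.continuous_comp continuous_subtype_val

lemma shiftMul_eq_sum (hC : ∀ n, ‖c n‖ ≤ C) (k : ℤ) (s : Finset ℤ)
    (hs : ∀ n ∉ s, c n = 0) (u : lp (fun _ : ℤ => ℂ) 2) :
    shiftMul c hC k u =
      ∑ n ∈ s, lp.single 2 n (c n * (u : ∀ _ : ℤ, ℂ) (n + k)) := by
  apply lp.ext
  funext m
  rw [shiftMul_apply]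
  simp only [lp.coeFn_sum, Finset.sum_apply, lp.single_apply, Finset.sum_dite_eq]
  by_cases hm : m ∈ s
  · simp [hm]
  · simp [hm, hs m hm]

lemma isCompactOperator_shiftMul_of_support (hC : ∀ n, ‖c n‖ ≤ C) (k : ℤ)
    (s : Finset ℤ) (hs : ∀ n ∉ s, c n = 0) : IsCompactOperator (shiftMul c hC k) := by
  apply isCompactOperator_of_finiteDimensionalRange
  have hle : LinearMap.range (shiftMul c hC k : lp (fun _ : ℤ => ℂ) 2 →ₗ[ℂ] lp (fun _ : ℤ => ℂ) 2) ≤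
      Submodule.span ℂ ((fun n : ℤ => lp.single 2 n (1:ℂ)) '' (s : Set ℤ)) := by
    rintro x ⟨u, rfl⟩
    show shiftMul c hC k u ∈ _
    rw [shiftMul_eq_sum hC k s hs u]
    refine Submodule.sum_mem _ fun n hn => ?_
    have hsingle : lp.single (E := fun _ : ℤ => ℂ) 2 n (c n * (u : ∀ _ : ℤ, ℂ) (n + k)) =
        (c n * (u : ∀ _ : ℤ, ℂ) (n + k)) • lp.single (E := fun _ : ℤ => ℂ) 2 n (1:ℂ) := by
      rw [← lp.single_smul, smul_eq_mul, mul_one]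
    rw [hsingle]
    exact Submodule.smul_mem _ _ (Submodule.subset_span ⟨n, hn, rfl⟩)
  have hfd : FiniteDimensional ℂ
      (Submodule.span ℂ ((fun n : ℤ => lp.single 2 n (1:ℂ)) '' (s : Set ℤ))) :=
    FiniteDimensional.span_of_finite ℂ (s.finite_toSet.image _)
  exact Submodule.finiteDimensional_of_le hle

lemma tendsto_abs_cofinite : Tendsto (fun n : ℤ => (|n| : ℝ)) cofinite atTop := by
  have h1 : Tendsto (fun n : ℤ => |n|) cofinite atTop := by
    rw [Int.cofinite_eq, tendsto_sup]
    exact ⟨tendsto_abs_atBot_atTop, tendsto_abs_atTop_atTop⟩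
  have h2 : Tendsto (fun m : ℤ => (m : ℝ)) atTop atTop := tendsto_intCast_atTop_atTop
  simpa [Function.comp_def, Int.cast_abs] using h2.comp h1

lemma norm_z_ge (ω : ℝ) (hω : 0 < ω) (p : ℂ) (n : ℤ) :
    ω * |(n:ℝ)| - ‖p‖ ≤ ‖p + Complex.I * (ω : ℂ) * (n : ℂ)‖ := by
  have h : ‖Complex.I * (ω : ℂ) * (n : ℂ)‖ = ω * |(n:ℝ)| := by
    simp [norm_mul, abs_of_pos hω]
  calc ω * |(n:ℝ)| - ‖p‖ = ‖Complex.I * (ω : ℂ) * (n : ℂ)‖ - ‖-p‖ := by rw [h, norm_neg]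
    _ ≤ ‖Complex.I * (ω : ℂ) * (n : ℂ) - (-p)‖ := norm_sub_norm_le _ _
    _ = ‖p + Complex.I * (ω : ℂ) * (n : ℂ)‖ := by ring_nf

lemma tendsto_denom (ω : ℝ) (hω : 0 < ω) (p : ℂ) :
    Tendsto (fun n : ℤ =>
      ‖Complex.log (p + Complex.I * (ω : ℂ) * (n : ℂ)) + 4 * (Real.pi : ℂ) * beta0‖)
      cofinite atTop := by
  set w : ℂ := 4 * (Real.pi : ℂ) * beta0 with hw
  have htend : Tendsto (fun n : ℤ => ω * |(n:ℝ)| - ‖p‖) cofinite atTop := by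
    have h1 : Tendsto (fun n : ℤ => ω * |(n:ℝ)|) cofinite atTop :=
      tendsto_abs_cofinite.const_mul_atTop hω
    simpa [sub_eq_add_neg] using tendsto_atTop_add_const_right cofinite (-‖p‖) h1
  have hlog : Tendsto (fun n : ℤ => Real.log (ω * |(n:ℝ)| - ‖p‖) - ‖w‖) cofinite atTop := by
    simpa [sub_eq_add_neg] using tendsto_atTop_add_const_right cofinite (-‖w‖)
      (Real.tendsto_log_atTop.comp htend)
  refine tendsto_atTop_mono' _ ?_ hlog
  filter_upwards [htend.eventually (eventually_ge_atTop 1)] with n hn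
  set z := p + Complex.I * (ω : ℂ) * (n : ℂ) with hz
  have h0 : (0:ℝ) < ω * |(n:ℝ)| - ‖p‖ := lt_of_lt_of_le one_pos hn
  have h1 : Real.log (ω * |(n:ℝ)| - ‖p‖) ≤ Real.log ‖z‖ :=
    Real.log_le_log h0 (norm_z_ge ω hω p n)
  have h2 : Real.log ‖z‖ ≤ ‖Complex.log z‖ := by
    have : Real.log ‖z‖ = (Complex.log z).re := (Complex.log_re z).symm
    rw [this]
    exact (le_abs_self _).trans (Complex.abs_re_le_norm _)
  have h3 : ‖Complex.log z‖ ≤ ‖Complex.log z + w‖ + ‖w‖ := by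
    have := norm_add_le (Complex.log z + w) (-w)
    simpa using this
  linarith

lemma tendsto_norm_c (α₀ ω : ℝ) (hω : 0 < ω) (p : ℂ) :
    Tendsto (fun n : ℤ => ‖-(α₀:ℂ) * hfun (p + Complex.I * (ω : ℂ) * (n : ℂ))‖)
      cofinite (𝓝 0) := by
  have hD := tendsto_denom ω hω p
  have h := (tendsto_const_nhds
      (x := |α₀| * (2 * Real.pi)) (f := cofinite (α := ℤ))).div_atTop hD
  refine h.congr fun n => ?_
  have hpi : (0:ℝ) ≤ Real.pi := Real.pi_pos.le
  simp [hfun, norm_mul, norm_div, Complex.norm_real, abs_of_nonneg hpi, mul_comm, mul_assoc,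
    mul_div_assoc]

end LopAux

open LopAux Filter Topology

/-- The operator `𝓛(α₀,p)` on `ℓ²(ℤ;ℂ)`, `(𝓛(α₀,p)u)ₙ = -α₀ h(p+iωn)(u_{n+1} - u_{n-1})`,
is a (bounded) compact operator. -/
theorem Lop_isCompactOperator (α₀ ω : ℝ) (hα : α₀ ≠ 0) (hω : 0 < ω) (p : ℂ)
    (h1 : ∀ n : ℤ, p + Complex.I * (ω : ℂ) * (n : ℂ) ≠ 0)
    (h2 : ∀ n : ℤ,
      Complex.log (p + Complex.I * (ω : ℂ) * (n : ℂ)) + 4 * (Real.pi : ℂ) * beta0 ≠ 0) :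
    ∃ L : lp (fun _ : ℤ => ℂ) 2 →L[ℂ] lp (fun _ : ℤ => ℂ) 2,
      (∀ u : lp (fun _ : ℤ => ℂ) 2, ∀ n : ℤ,
        (L u : ∀ _ : ℤ, ℂ) n =
          -(α₀ : ℂ) * hfun (p + Complex.I * (ω : ℂ) * (n : ℂ)) *
            ((u : ∀ _ : ℤ, ℂ) (n + 1) - (u : ∀ _ : ℤ, ℂ) (n - 1))) ∧
      IsCompactOperator L := by
  classical
  set c : ℤ → ℂ := fun n => -(α₀:ℂ) * hfun (p + Complex.I * (ω : ℂ) * (n : ℂ)) with hc_def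
  have hc0 : Tendsto (fun n : ℤ => ‖c n‖) cofinite (𝓝 0) := tendsto_norm_c α₀ ω hω p
  -- a global bound
  have hfin : {n : ℤ | ¬ ‖c n‖ < 1}.Finite := by
    have := hc0.eventually (gt_mem_nhds one_pos)
    rwa [Filter.eventually_cofinite] at this
  obtain ⟨B, hB⟩ := (hfin.image fun n => ‖c n‖).bddAbove
  set C : ℝ := max 1 B with hCdef
  have hC : ∀ n, ‖c n‖ ≤ C := by
    intro n
    by_cases h : ‖c n‖ < 1
    · exact h.le.trans (le_max_left _ _)
    · exact (hB (Set.mem_image_of_mem _ h)).trans (le_max_right _ _)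
  have hC0 : 0 ≤ C := le_trans (norm_nonneg _) (hC 0)
  set L : lp (fun _ : ℤ => ℂ) 2 →L[ℂ] lp (fun _ : ℤ => ℂ) 2 :=
    shiftMul c hC 1 - shiftMul c hC (-1) with hLdef
  refine ⟨L, ?_, ?_⟩
  · intro u n
    have : (L u : ∀ _ : ℤ, ℂ) n =
        (shiftMul c hC 1 u : ∀ _ : ℤ, ℂ) n - (shiftMul c hC (-1) u : ∀ _ : ℤ, ℂ) n := by
      rw [hLdef, ContinuousLinearMap.sub_apply, lp.coeFn_sub, Pi.sub_apply]
    rw [this, shiftMul_apply, shiftMul_apply]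
    have hn : n + (-1 : ℤ) = n - 1 := by ring
    rw [hn]
    ring
  · -- compactness via finite-rank approximations
    set cN : ℕ → ℤ → ℂ := fun N n => if n ∈ Finset.Icc (-(N:ℤ)) (N:ℤ) then c n else 0 with hcN
    have hCN : ∀ N n, ‖cN N n‖ ≤ C := by
      intro N n
      show ‖if n ∈ Finset.Icc (-(N:ℤ)) (N:ℤ) then c n else 0‖ ≤ C
      split_ifs
      · exact hC n
      · simpa using hC0
    set LN : ℕ → lp (fun _ : ℤ => ℂ) 2 →L[ℂ] lp (fun _ : ℤ => ℂ) 2 :=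
      fun N => shiftMul (cN N) (hCN N) 1 - shiftMul (cN N) (hCN N) (-1) with hLN
    have hcmp : ∀ N, IsCompactOperator (LN N) := by
      intro N
      have hsupp : ∀ n ∉ Finset.Icc (-(N:ℤ)) (N:ℤ), cN N n = 0 := by
        intro n hn
        show (if n ∈ Finset.Icc (-(N:ℤ)) (N:ℤ) then c n else 0) = 0
        rw [if_neg hn]
      exact (isCompactOperator_shiftMul_of_support (hCN N) 1 _ hsupp).sub
        (isCompactOperator_shiftMul_of_support (hCN N) (-1) _ hsupp)
    have htend : Tendsto LN atTop (𝓝 L) := by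
      rw [Metric.tendsto_atTop]
      intro ε hε
      have hε3 : 0 < ε / 3 := by linarith
      have hfinε : {n : ℤ | ¬ ‖c n‖ < ε / 3}.Finite := by
        have := hc0.eventually (gt_mem_nhds hε3)
        rwa [Filter.eventually_cofinite] at this
      set N₀ : ℕ := hfinε.toFinset.sup fun n => n.natAbs with hN₀
      refine ⟨N₀, fun N hN => ?_⟩
      -- tail coefficients are small
      have htail : ∀ n, ‖c n - cN N n‖ ≤ ε / 3 := by
        intro n
        show ‖c n - if n ∈ Finset.Icc (-(N:ℤ)) (N:ℤ) then c n else 0‖ ≤ ε / 3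
        by_cases h : n ∈ Finset.Icc (-(N:ℤ)) (N:ℤ)
        · rw [if_pos h]
          simpa using hε3.le
        · have hnF : n ∉ {n : ℤ | ¬ ‖c n‖ < ε / 3} := by
            intro hmem
            apply h
            have h1 : n.natAbs ≤ N₀ := by
              rw [hN₀]
              exact Finset.le_sup (Set.Finite.mem_toFinset hfinε |>.mpr hmem)
            have h2 : |n| ≤ (N : ℤ) := by
              rw [Int.abs_eq_natAbs]
              exact_mod_cast h1.trans hN
            rw [Finset.mem_Icc]
            exact abs_le.mp h2
          have hlt : ‖c n‖ < ε / 3 := not_not.mp hnF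
          rw [if_neg h]
          simpa using hlt.le
      have htail' : ∀ n, ‖c n - cN N n‖ ≤ C + C := by
        intro n
        calc ‖c n - cN N n‖ ≤ ‖c n‖ + ‖cN N n‖ := norm_sub_le _ _
          _ ≤ C + C := add_le_add (hC n) (hCN N n)
      have hdiff : ∀ k : ℤ, shiftMul c hC k - shiftMul (cN N) (hCN N) k =
          shiftMul (fun n => c n - cN N n) htail' k := fun k =>
        shiftMul_sub_shiftMul hC (hCN N) htail' k
      have hnorm : ‖L - LN N‖ ≤ ε / 3 + ε / 3 := by
        have hLL : L - LN N =
            (shiftMul c hC 1 - shiftMul (cN N) (hCN N) 1) -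
            (shiftMul c hC (-1) - shiftMul (cN N) (hCN N) (-1)) := by
          rw [hLdef, hLN]
          exact sub_sub_sub_comm _ _ _ _
        rw [hLL, hdiff 1, hdiff (-1)]
        exact (norm_sub_le _ _).trans (add_le_add
          (norm_shiftMul_le htail' 1 htail) (norm_shiftMul_le htail' (-1) htail))
      have : dist (LN N) L < ε := by
        rw [dist_eq_norm, ← norm_neg]
        have : -(LN N - L) = L - LN N := by abel
        rw [this]
        linarith
      exact this
    exact isCompactOperator_of_tendsto htend (Eventually.of_forall hcmp)
end

section
/- Let ω > 0 and M > 0. Then there exist A₀ > 0 and r₁, r₂ > 0 such that for every real α₀ with 0 < |α₀| < A₀: (i) the map 𝓝 defined by (𝓝ρ)(p) := α₀ h(p)/(1 + α₀ h(p) ρ(p + iω)) maps the closed ball {ρ : ‖ρ‖_∞ ≤ M} of the Banach space of bounded continuous complex-valued functions on J_{r₁} := {p ∈ ℂ : Im(p) ≥ r₁, Re(p) ∈ [0,1]} into itself and is a contraction there, hence has a unique fixed point in that ball, and the fixed point is analytic on the interior of J_{r₁}; (ii) similarly, the map 𝓜 defined by (𝓜Ω)(p) := −α₀ h(p − iω)/(1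 − α₀ h(p − iω) Ω(p − iω)) maps the closed ball {Ω : ‖Ω‖_∞ ≤ M} of the bounded continuous functions on K_{r₂} := {p ∈ ℂ : Im(p) ≤ −r₂, Re(p) ∈ [0,1]} into itself and is a contraction there, hence has a unique fixed point in that ball, and the fixed point is analytic on the interior of K_{r₂}. -/
open MeasureTheory

/-- `J_r := {p ∈ ℂ : Im p ≥ r, Re p ∈ [0,1]}`. -/
def Jset (r : ℝ) : Set ℂ := {p : ℂ | r ≤ p.im ∧ p.re ∈ Set.Icc 0 1}

/-- `K_r := {p ∈ ℂ : Im p ≤ -r, Re p ∈ [0,1]}`. -/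
def Kset (r : ℝ) : Set ℂ := {p : ℂ | p.im ≤ -r ∧ p.re ∈ Set.Icc 0 1}

/-- `(𝓝ρ)(p) := α₀ h(p) / (1 + α₀ h(p) ρ(p+iω))`. -/
noncomputable def Nmap (α₀ ω : ℝ) (ρ : ℂ → ℂ) (p : ℂ) : ℂ :=
  (α₀ : ℂ) * hfun p / (1 + (α₀ : ℂ) * hfun p * ρ (p + Complex.I * (ω : ℂ)))

/-- `(𝓜Ω)(p) := -α₀ h(p-iω) / (1 - α₀ h(p-iω) Ω(p-iω))`. -/
noncomputable def Mmap (α₀ ω : ℝ) (Ω : ℂ → ℂ) (p : ℂ) : ℂ :=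
  -((α₀ : ℂ) * hfun (p - Complex.I * (ω : ℂ))) /
    (1 - (α₀ : ℂ) * hfun (p - Complex.I * (ω : ℂ)) * Ω (p - Complex.I * (ω : ℂ)))
open Filter Topology

lemma myAbsOneAdd {w : ℂ} (h : ‖w‖ ≤ 1/2) : 1/2 ≤ ‖1 + w‖ := by
  have h1 : (1:ℝ) ≤ ‖1 + w‖ + ‖w‖ := by
    calc (1:ℝ) = ‖(1 + w) + (-w)‖ := by norm_num
    _ ≤ ‖1 + w‖ + ‖-w‖ := norm_add_le _ _
    _ = ‖1 + w‖ + ‖w‖ := by rw [norm_neg]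
  linarith

noncomputable def Rbig : ℝ := Real.exp (1 + 4 * Real.pi * ‖beta0‖)

lemma one_lt_Rbig : 1 < Rbig := by
  have h : (0:ℝ) < 1 + 4 * Real.pi * ‖beta0‖ := by positivity
  calc (1:ℝ) = Real.exp 0 := Real.exp_zero.symm
  _ < Rbig := Real.exp_lt_exp.2 h

lemma hfun_den_lb {p : ℂ} (hp : Rbig ≤ |p.im|) :
    1 ≤ ‖Complex.log p + 4 * (Real.pi : ℂ) * beta0‖ := by
  have habs : Rbig ≤ ‖p‖ := le_trans hp (Complex.abs_im_le_norm p)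
  have hR0 : (0:ℝ) < Rbig := lt_trans one_pos one_lt_Rbig
  have hlog : 1 + 4 * Real.pi * ‖beta0‖ ≤ Real.log (‖p‖) := by
    rw [← Real.log_exp (1 + 4 * Real.pi * ‖beta0‖)]
    exact Real.log_le_log (Real.exp_pos _) habs
  have h1 : (Complex.log p).re = Real.log (‖p‖) := Complex.log_re p
  have h2 : |(Complex.log p).re| ≤ ‖Complex.log p‖ := Complex.abs_re_le_norm _
  have h3 : ‖4 * (Real.pi : ℂ) * beta0‖ = 4 * Real.pi * ‖beta0‖ := by
    rw [norm_mul, norm_mul]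
    norm_num [Complex.norm_real, abs_of_nonneg Real.pi_pos.le]
  have h4 : ‖Complex.log p‖ - ‖4 * (Real.pi : ℂ) * beta0‖
      ≤ ‖Complex.log p + 4 * (Real.pi : ℂ) * beta0‖ := by
    have t := norm_add_le (Complex.log p + 4 * (Real.pi : ℂ) * beta0)
      (-(4 * (Real.pi : ℂ) * beta0))
    rw [add_neg_cancel_right, norm_neg] at t
    linarith
  have h5 : (Complex.log p).re ≤ |(Complex.log p).re| := le_abs_self _
  rw [h3] at h4
  rw [h1] at h5 h2
  linarith

lemma hfun_abs_le {p : ℂ} (hp : Rbig ≤ |p.im|) : ‖hfun p‖ ≤ 2 * Real.pi := by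
  have hd := hfun_den_lb hp
  have hnum : ‖2 * (Real.pi : ℂ) * Complex.I‖ = 2 * Real.pi := by
    rw [norm_mul, norm_mul]
    norm_num [Complex.norm_real, abs_of_nonneg Real.pi_pos.le]
  rw [hfun, norm_div, hnum]
  exact div_le_self (by positivity) hd

lemma hfun_analyticAt {p : ℂ} (hp : Rbig ≤ |p.im|) : AnalyticAt ℂ hfun p := by
  have hR0 : (0:ℝ) < Rbig := lt_trans one_pos one_lt_Rbig
  have him : p.im ≠ 0 := by
    intro h; rw [h] at hp; simp at hp; linarith
  have hlog : AnalyticAt ℂ Complex.log p := analyticAt_clog (Or.inr him)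
  have hden : AnalyticAt ℂ (fun z => Complex.log z + 4 * (Real.pi : ℂ) * beta0) p :=
    hlog.add analyticAt_const
  have hne : Complex.log p + 4 * (Real.pi : ℂ) * beta0 ≠ 0 := by
    intro h0
    have := hfun_den_lb hp
    rw [h0, norm_zero] at this; linarith
  exact analyticAt_const.div hden hne
lemma key_lemma (S U : Set ℂ) (hUopen : IsOpen U) (hUS : U ⊆ S)
    (c : ℂ) (hcS : ∀ p ∈ S, p + c ∈ S) (hcU : ∀ p ∈ U, p + c ∈ U)
    (g : ℂ → ℂ) (hgc : ContinuousOn g S) (hga : AnalyticOnNhd ℂ g U)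
    (M ε : ℝ) (hM : 0 < M) (hε0 : 0 ≤ ε)
    (hgb : ∀ p ∈ S, ‖g p‖ ≤ ε)
    (hε1 : ε * M ≤ 1/2) (hε2 : 2 * ε ≤ M) (hε3 : ε ≤ 1/4) :
    (∀ ρ : ℂ → ℂ, ContinuousOn ρ S → (∀ p ∈ S, ‖ρ p‖ ≤ M) →
        ContinuousOn (fun p => g p / (1 + g p * ρ (p + c))) S ∧
        ∀ p ∈ S, ‖g p / (1 + g p * ρ (p + c))‖ ≤ M) ∧
    (∀ ρ₁ ρ₂ : ℂ → ℂ, (∀ p ∈ S, ‖ρ₁ p‖ ≤ M) →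
      (∀ p ∈ S, ‖ρ₂ p‖ ≤ M) →
      ∀ d : ℝ, (∀ p ∈ S, ‖ρ₁ p - ρ₂ p‖ ≤ d) →
        ∀ p ∈ S, ‖g p / (1 + g p * ρ₁ (p + c)) -
          g p / (1 + g p * ρ₂ (p + c))‖ ≤ (1/2) * d) ∧
    (∃ ρ : ℂ → ℂ, ContinuousOn ρ S ∧ (∀ p ∈ S, ‖ρ p‖ ≤ M) ∧
      (∀ p ∈ S, ρ p = g p / (1 + g p * ρ (p + c))) ∧
      AnalyticOnNhd ℂ ρ U ∧
      ∀ ρ' : ℂ → ℂ, (∀ p ∈ S, ‖ρ' p‖ ≤ M) →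
        (∀ p ∈ S, ρ' p = g p / (1 + g p * ρ' (p + c))) →
        ∀ p ∈ S, ρ' p = ρ p) := by
  set T : (ℂ → ℂ) → ℂ → ℂ := fun ρ p => g p / (1 + g p * ρ (p + c)) with hTdef
  -- denominator lower bound
  have den : ∀ ρ : ℂ → ℂ, (∀ p ∈ S, ‖ρ p‖ ≤ M) → ∀ p ∈ S,
      1/2 ≤ ‖1 + g p * ρ (p + c)‖ := by
    intro ρ hρ p hp
    apply myAbsOneAdd
    rw [norm_mul]
    calc ‖g p‖ * ‖ρ (p + c)‖ ≤ ε * M :=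
      mul_le_mul (hgb p hp) (hρ _ (hcS p hp)) (norm_nonneg _) hε0
    _ ≤ 1/2 := hε1
  have denne : ∀ ρ : ℂ → ℂ, (∀ p ∈ S, ‖ρ p‖ ≤ M) → ∀ p ∈ S,
      (1 + g p * ρ (p + c)) ≠ 0 := by
    intro ρ hρ p hp h0
    have := den ρ hρ p hp
    rw [h0, norm_zero] at this; linarith
  -- mapping bound
  have mapb : ∀ ρ : ℂ → ℂ, (∀ p ∈ S, ‖ρ p‖ ≤ M) → ∀ p ∈ S,
      ‖T ρ p‖ ≤ M := by
    intro ρ hρ p hp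
    have hden := den ρ hρ p hp
    calc ‖T ρ p‖
        = ‖g p‖ / ‖1 + g p * ρ (p + c)‖ := norm_div _ _
    _ ≤ ε / (1/2) := div_le_div₀ hε0 (hgb p hp) one_half_pos hden
    _ = 2 * ε := by ring
    _ ≤ M := hε2
  -- continuity
  have mapc : ∀ ρ : ℂ → ℂ, ContinuousOn ρ S → (∀ p ∈ S, ‖ρ p‖ ≤ M) →
      ContinuousOn (T ρ) S := by
    intro ρ hρc hρb
    have hcomp : ContinuousOn (fun p => ρ (p + c)) S :=
      hρc.comp ((continuous_id.add continuous_const).continuousOn) (fun p hp => hcS p hp)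
    exact hgc.div (continuousOn_const.add (hgc.mul hcomp)) (denne ρ hρb)
  -- contraction
  have contr : ∀ ρ₁ ρ₂ : ℂ → ℂ, (∀ p ∈ S, ‖ρ₁ p‖ ≤ M) →
      (∀ p ∈ S, ‖ρ₂ p‖ ≤ M) →
      ∀ d : ℝ, (∀ p ∈ S, ‖ρ₁ p - ρ₂ p‖ ≤ d) →
      ∀ p ∈ S, ‖T ρ₁ p - T ρ₂ p‖ ≤ (1/2) * d := by
    intro ρ₁ ρ₂ h1 h2 d hd p hp
    have hd1 := den ρ₁ h1 p hp
    have hd2 := den ρ₂ h2 p hp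
    have hD₁ : (1 + g p * ρ₁ (p + c)) ≠ 0 := denne ρ₁ h1 p hp
    have hD₂ : (1 + g p * ρ₂ (p + c)) ≠ 0 := denne ρ₂ h2 p hp
    have hσ : p + c ∈ S := hcS p hp
    have hd0 : 0 ≤ d := le_trans (norm_nonneg _) (hd _ hσ)
    have habd : ‖ρ₂ (p + c) - ρ₁ (p + c)‖ ≤ d := by
      rw [show ρ₂ (p + c) - ρ₁ (p + c) = -(ρ₁ (p + c) - ρ₂ (p + c)) by ring, norm_neg]
      exact hd _ hσ
    have hkey : T ρ₁ p - T ρ₂ p =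
        g p * g p * (ρ₂ (p + c) - ρ₁ (p + c)) /
          ((1 + g p * ρ₁ (p + c)) * (1 + g p * ρ₂ (p + c))) := by
      rw [hTdef]
      field_simp
      ring
    rw [hkey, norm_div, norm_mul, norm_mul, norm_mul]
    have hnum : ‖g p‖ * ‖g p‖ * ‖ρ₂ (p+c) - ρ₁ (p+c)‖
        ≤ ε * ε * d := by
      have a1 := hgb p hp
      have a0 := norm_nonneg (g p)
      have a2 := norm_nonneg (ρ₂ (p+c) - ρ₁ (p+c))
      have t1 : ‖g p‖ * ‖g p‖ ≤ ε * ε :=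
        mul_le_mul a1 a1 a0 hε0
      exact mul_le_mul t1 habd a2 (by positivity)
    have hden4 : (1/4 : ℝ) ≤
        ‖1 + g p * ρ₁ (p + c)‖ * ‖1 + g p * ρ₂ (p + c)‖ := by
      nlinarith
    calc ‖g p‖ * ‖g p‖ * ‖ρ₂ (p+c) - ρ₁ (p+c)‖ /
          (‖1 + g p * ρ₁ (p + c)‖ * ‖1 + g p * ρ₂ (p + c)‖)
        ≤ (ε * ε * d) / (1/4) := by
          apply div_le_div₀ (by positivity) hnum (by norm_num) hden4
    _ = 4 * (ε * ε) * d := by ring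
    _ ≤ (1/2) * d := by
          have t2 : ε * ε ≤ 1/16 := by nlinarith
          nlinarith
  -- analyticity of the image
  have mapa : ∀ ρ : ℂ → ℂ, (∀ p ∈ S, ‖ρ p‖ ≤ M) → AnalyticOnNhd ℂ ρ U →
      AnalyticOnNhd ℂ (T ρ) U := by
    intro ρ hρb hρa
    have hshift : AnalyticOnNhd ℂ (fun p => ρ (p + c)) U := by
      have := hρa.comp (fun z (_ : z ∈ U) => (analyticAt_id.add analyticAt_const))
        (fun z hz => hcU z hz)
      exact this
    intro z hz
    exact (hga z hz).div (analyticAt_const.add ((hga z hz).mul (hshift z hz)))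
      (denne ρ hρb z (hUS hz))
  refine ⟨fun ρ hc hb => ⟨mapc ρ hc hb, mapb ρ hb⟩, contr, ?_⟩
  -- the iteration
  set seq : ℕ → ℂ → ℂ := fun n => T^[n] (fun _ => 0) with hseqdef
  have seq_succ : ∀ n, seq (n + 1) = T (seq n) := fun n =>
    Function.iterate_succ_apply' T n _
  have bnd : ∀ n, ∀ p ∈ S, ‖seq n p‖ ≤ M := by
    intro n
    induction n with
    | zero => intro p hp; simp [hseqdef]; exact hM.le
    | succ n ih => intro p hp; rw [seq_succ]; exact mapb (seq n) ih p hp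
  have cont : ∀ n, ContinuousOn (seq n) S := by
    intro n
    induction n with
    | zero => exact continuousOn_const
    | succ n ih => rw [seq_succ]; exact mapc (seq n) ih (bnd n)
  have anal : ∀ n, AnalyticOnNhd ℂ (seq n) U := by
    intro n
    induction n with
    | zero => exact fun z _ => analyticAt_const
    | succ n ih => rw [seq_succ]; exact mapa (seq n) (bnd n) ih
  have diffb : ∀ n, ∀ p ∈ S, ‖seq (n+1) p - seq n p‖ ≤ M * (1/2)^n := by
    intro n
    induction n with
    | zero =>
      intro p hp
      simp only [pow_zero, mul_one]
      have h0 : seq 0 p = 0 := rfl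
      rw [seq_succ, h0, sub_zero]
      exact mapb (seq 0) (bnd 0) p hp
    | succ n ih =>
      intro p hp
      have e1 := congrFun (seq_succ (n+1)) p
      have e2 := congrFun (seq_succ n) p
      rw [e1, e2]
      calc ‖T (seq (n+1)) p - T (seq n) p‖ ≤ (1/2) * (M * (1/2)^n) :=
        contr (seq (n+1)) (seq n) (bnd (n+1)) (bnd n) (M * (1/2)^n) ih p hp
      _ = M * (1/2)^(n+1) := by ring
  have hdist : ∀ p ∈ S, ∀ n, dist (seq n p) (seq (n+1) p) ≤ M * (1/2)^n := by
    intro p hp n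
    rw [Complex.dist_eq, show seq n p - seq (n+1) p = -(seq (n+1) p - seq n p) by ring,
      norm_neg]
    exact diffb n p hp
  set ρlim : ℂ → ℂ := fun p => limUnder atTop (fun n => seq n p) with hρlimdef
  have hconv : ∀ p ∈ S, Tendsto (fun n => seq n p) atTop (𝓝 (ρlim p)) := by
    intro p hp
    exact (cauchySeq_of_le_geometric (1/2) M (by norm_num) (hdist p hp)).tendsto_limUnder
  have hub : ∀ n, ∀ p ∈ S, ‖seq n p - ρlim p‖ ≤ 2 * M * (1/2)^n := by
    intro n p hp
    have h := dist_le_of_le_geometric_of_tendsto (1/2) M (by norm_num) (hdist p hp)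
      (hconv p hp) n
    rw [Complex.dist_eq] at h
    calc ‖seq n p - ρlim p‖ ≤ M * (1/2)^n / (1 - 1/2) := h
    _ = 2 * M * (1/2)^n := by ring
  have hgeo : Tendsto (fun n : ℕ => (2 * M) * (1/2:ℝ)^n) atTop (𝓝 0) := by
    have := tendsto_pow_atTop_nhds_zero_of_lt_one (by norm_num : (0:ℝ) ≤ 1/2)
      (by norm_num : (1/2:ℝ) < 1)
    simpa using this.const_mul (2 * M)
  have huconv : TendstoUniformlyOn seq ρlim atTop S := by
    rw [Metric.tendstoUniformlyOn_iff]
    intro δ hδ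
    filter_upwards [hgeo.eventually (gt_mem_nhds hδ)] with n hn p hp
    rw [dist_comm, Complex.dist_eq]
    calc ‖seq n p - ρlim p‖ ≤ 2 * M * (1/2)^n := hub n p hp
    _ < δ := hn
  have contρ : ContinuousOn ρlim S :=
    huconv.continuousOn (Filter.Eventually.of_forall cont).frequently
  have bndρ : ∀ p ∈ S, ‖ρlim p‖ ≤ M := by
    intro p hp
    have ht : Tendsto (fun n => ‖seq n p‖) atTop (𝓝 (‖ρlim p‖)) :=
      (continuous_norm.tendsto _).comp (hconv p hp)
    exact le_of_tendsto ht (Filter.Eventually.of_forall fun n => bnd n p hp)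
  have fixρ : ∀ p ∈ S, ρlim p = T ρlim p := by
    intro p hp
    have h1 : Tendsto (fun n => seq (n+1) p) atTop (𝓝 (ρlim p)) :=
      (hconv p hp).comp (tendsto_add_atTop_nat 1)
    have h2 : Tendsto (fun n => seq (n+1) p) atTop (𝓝 (T ρlim p)) := by
      rw [tendsto_iff_dist_tendsto_zero]
      apply squeeze_zero (fun n => dist_nonneg) (g := fun n => (1/2) * (2 * M * (1/2)^n))
      · intro n
        rw [Complex.dist_eq, congrFun (seq_succ n) p]
        exact contr (seq n) ρlim (bnd n) bndρ (2 * M * (1/2)^n)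
          (fun q hq => hub n q hq) p hp
      · have := hgeo.const_mul (1/2 : ℝ)
        simpa [mul_assoc] using this
    exact tendsto_nhds_unique h1 h2
  have analρ : AnalyticOnNhd ℂ ρlim U := by
    have hdiff : DifferentiableOn ℂ ρlim U :=
      ((huconv.mono hUS).tendstoLocallyUniformlyOn).differentiableOn
        (Filter.Eventually.of_forall fun n z hz =>
          ((anal n z hz).differentiableAt).differentiableWithinAt) hUopen
    exact hdiff.analyticOnNhd hUopen
  have uniq : ∀ ρ' : ℂ → ℂ, (∀ p ∈ S, ‖ρ' p‖ ≤ M) →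
      (∀ p ∈ S, ρ' p = T ρ' p) → ∀ p ∈ S, ρ' p = ρlim p := by
    intro ρ' hb' hf' p hp
    have hkey : ∀ n, ∀ q ∈ S, ‖ρ' q - ρlim q‖ ≤ 2 * M * (1/2)^n := by
      intro n
      induction n with
      | zero =>
        intro q hq
        simp only [pow_zero, mul_one]
        have h := norm_sub_le (ρ' q) (ρlim q)
        have := hb' q hq
        have := bndρ q hq
        linarith
      | succ n ih =>
        intro q hq
        rw [hf' q hq, fixρ q hq]
        calc ‖T ρ' q - T ρlim q‖ ≤ (1/2) * (2 * M * (1/2)^n) :=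
          contr ρ' ρlim hb' bndρ (2 * M * (1/2)^n) ih q hq
        _ = 2 * M * (1/2)^(n+1) := by ring
    have h0 : ‖ρ' p - ρlim p‖ ≤ 0 :=
      ge_of_tendsto hgeo (Filter.Eventually.of_forall fun n => hkey n p hp)
    have := le_antisymm h0 (norm_nonneg _)
    rw [norm_eq_zero, sub_eq_zero] at this
    exact this
  exact ⟨ρlim, contρ, bndρ, fixρ, analρ, uniq⟩
/-- For small `|α₀|`, the maps `𝓝` and `𝓜` are contractions on the closed `M`-balls of the
bounded continuous functions on `J_{r₁}` and `K_{r₂}` respectively, and hence possess unique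
fixed points there, which are moreover analytic on the interiors. -/
theorem contraction_continued_fraction_maps (ω M : ℝ) (hω : 0 < ω) (hM : 0 < M) :
    ∃ A₀ : ℝ, 0 < A₀ ∧ ∃ r₁ : ℝ, 0 < r₁ ∧ ∃ r₂ : ℝ, 0 < r₂ ∧
      ∀ α₀ : ℝ, 0 < |α₀| → |α₀| < A₀ →
        -- (i) the map 𝓝 on the ball of radius M of C(J_{r₁})
        ((∀ ρ : ℂ → ℂ, ContinuousOn ρ (Jset r₁) →
            (∀ p ∈ Jset r₁, ‖ρ p‖ ≤ M) →
            ContinuousOn (Nmap α₀ ω ρ) (Jset r₁) ∧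
              ∀ p ∈ Jset r₁, ‖Nmap α₀ ω ρ p‖ ≤ M) ∧
          (∃ K : ℝ, 0 ≤ K ∧ K < 1 ∧
            ∀ ρ₁ ρ₂ : ℂ → ℂ, ContinuousOn ρ₁ (Jset r₁) →
              (∀ p ∈ Jset r₁, ‖ρ₁ p‖ ≤ M) →
              ContinuousOn ρ₂ (Jset r₁) →
              (∀ p ∈ Jset r₁, ‖ρ₂ p‖ ≤ M) →
              ∀ d : ℝ, (∀ p ∈ Jset r₁, ‖ρ₁ p - ρ₂ p‖ ≤ d) →
                ∀ p ∈ Jset r₁, ‖Nmap α₀ ω ρ₁ p - Nmap α₀ ω ρ₂ p‖ ≤ K * d) ∧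
          (∃ ρ : ℂ → ℂ, ContinuousOn ρ (Jset r₁) ∧
            (∀ p ∈ Jset r₁, ‖ρ p‖ ≤ M) ∧
            (∀ p ∈ Jset r₁, ρ p = Nmap α₀ ω ρ p) ∧
            AnalyticOnNhd ℂ ρ {p : ℂ | r₁ < p.im ∧ p.re ∈ Set.Ioo 0 1} ∧
            ∀ ρ' : ℂ → ℂ, ContinuousOn ρ' (Jset r₁) →
              (∀ p ∈ Jset r₁, ‖ρ' p‖ ≤ M) →
              (∀ p ∈ Jset r₁, ρ' p = Nmap α₀ ω ρ' p) →
              ∀ p ∈ Jset r₁, ρ' p = ρ p)) ∧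
        -- (ii) the map 𝓜 on the ball of radius M of C(K_{r₂})
        ((∀ Ω : ℂ → ℂ, ContinuousOn Ω (Kset r₂) →
            (∀ p ∈ Kset r₂, ‖Ω p‖ ≤ M) →
            ContinuousOn (Mmap α₀ ω Ω) (Kset r₂) ∧
              ∀ p ∈ Kset r₂, ‖Mmap α₀ ω Ω p‖ ≤ M) ∧
          (∃ K : ℝ, 0 ≤ K ∧ K < 1 ∧
            ∀ Ω₁ Ω₂ : ℂ → ℂ, ContinuousOn Ω₁ (Kset r₂) →
              (∀ p ∈ Kset r₂, ‖Ω₁ p‖ ≤ M) →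
              ContinuousOn Ω₂ (Kset r₂) →
              (∀ p ∈ Kset r₂, ‖Ω₂ p‖ ≤ M) →
              ∀ d : ℝ, (∀ p ∈ Kset r₂, ‖Ω₁ p - Ω₂ p‖ ≤ d) →
                ∀ p ∈ Kset r₂, ‖Mmap α₀ ω Ω₁ p - Mmap α₀ ω Ω₂ p‖ ≤ K * d) ∧
          (∃ Ω : ℂ → ℂ, ContinuousOn Ω (Kset r₂) ∧
            (∀ p ∈ Kset r₂, ‖Ω p‖ ≤ M) ∧
            (∀ p ∈ Kset r₂, Ω p = Mmap α₀ ω Ω p) ∧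
            AnalyticOnNhd ℂ Ω {p : ℂ | p.im < -r₂ ∧ p.re ∈ Set.Ioo 0 1} ∧
            ∀ Ω' : ℂ → ℂ, ContinuousOn Ω' (Kset r₂) →
              (∀ p ∈ Kset r₂, ‖Ω' p‖ ≤ M) →
              (∀ p ∈ Kset r₂, Ω' p = Mmap α₀ ω Ω' p) →
              ∀ p ∈ Kset r₂, Ω' p = Ω p)) := by
  have hπ := Real.pi_pos
  have hR0 : (0:ℝ) < Rbig := lt_trans one_pos one_lt_Rbig
  refine ⟨min (min (1/(8*Real.pi)) (1/(8*Real.pi*M))) (M/(8*Real.pi)), ?_, Rbig, hR0,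
    Rbig, hR0, ?_⟩
  · apply lt_min (lt_min (by positivity) (by positivity)) (by positivity)
  intro α₀ hα0 hαA
  have ha0 : (0:ℝ) ≤ |α₀| := abs_nonneg α₀
  have k1 : |α₀| * (8*Real.pi) < 1 := by
    rw [← lt_div_iff₀ (by positivity : (0:ℝ) < 8*Real.pi)]
    calc |α₀| < _ := hαA
    _ ≤ 1/(8*Real.pi) := le_trans (min_le_left _ _) (min_le_left _ _)
  have k2 : |α₀| * (8*Real.pi*M) < 1 := by
    rw [← lt_div_iff₀ (by positivity : (0:ℝ) < 8*Real.pi*M)]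
    calc |α₀| < _ := hαA
    _ ≤ 1/(8*Real.pi*M) := le_trans (min_le_left _ _) (min_le_right _ _)
  have k3 : |α₀| * (8*Real.pi) < M := by
    rw [← lt_div_iff₀ (by positivity : (0:ℝ) < 8*Real.pi)]
    calc |α₀| < _ := hαA
    _ ≤ M/(8*Real.pi) := min_le_right _ _
  set ε : ℝ := |α₀| * (2*Real.pi) with hεdef
  have hε0 : 0 ≤ ε := by positivity
  have hε1 : ε * M ≤ 1/2 := by nlinarith
  have hε2 : 2 * ε ≤ M := by nlinarith
  have hε3 : ε ≤ 1/4 := by nlinarith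
  have habs_mul : ∀ z : ℂ, ‖(α₀ : ℂ) * z‖ = |α₀| * ‖z‖ := by
    intro z; rw [norm_mul, Complex.norm_real, Real.norm_eq_abs]
  constructor
  · -- part (i)
    have hopen : IsOpen {p : ℂ | Rbig < p.im ∧ p.re ∈ Set.Ioo 0 1} :=
      (isOpen_Ioi.preimage Complex.continuous_im).inter
        ((isOpen_Ioo).preimage Complex.continuous_re)
    have hsub : {p : ℂ | Rbig < p.im ∧ p.re ∈ Set.Ioo 0 1} ⊆ Jset Rbig := by
      rintro p ⟨h1, h2, h3⟩
      exact ⟨h1.le, h2.le, h3.le⟩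
    have hshiftS : ∀ p ∈ Jset Rbig, p + Complex.I * (ω : ℂ) ∈ Jset Rbig := by
      rintro p ⟨h1, h2⟩
      constructor
      · simp only [Complex.add_im, Complex.mul_im, Complex.I_re, Complex.I_im,
          Complex.ofReal_re, Complex.ofReal_im]
        nlinarith
      · simpa [Complex.add_re] using h2
    have hshiftU : ∀ p ∈ {p : ℂ | Rbig < p.im ∧ p.re ∈ Set.Ioo 0 1},
        p + Complex.I * (ω : ℂ) ∈ {p : ℂ | Rbig < p.im ∧ p.re ∈ Set.Ioo 0 1} := by
      rintro p ⟨h1, h2⟩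
      constructor
      · simp only [Complex.add_im, Complex.mul_im, Complex.I_re, Complex.I_im,
          Complex.ofReal_re, Complex.ofReal_im]
        nlinarith
      · simpa [Complex.add_re] using h2
    have hgcont : ContinuousOn (fun p => (α₀ : ℂ) * hfun p) (Jset Rbig) := by
      intro p hp
      have him : Rbig ≤ |p.im| := le_trans hp.1 (le_abs_self _)
      exact (continuousAt_const.mul (hfun_analyticAt him).continuousAt).continuousWithinAt
    have hganal : AnalyticOnNhd ℂ (fun p => (α₀ : ℂ) * hfun p)
        {p : ℂ | Rbig < p.im ∧ p.re ∈ Set.Ioo 0 1} := by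
      intro p hp
      have him : Rbig ≤ |p.im| := le_trans hp.1.le (le_abs_self _)
      exact analyticAt_const.mul (hfun_analyticAt him)
    have hgbd : ∀ p ∈ Jset Rbig, ‖(α₀ : ℂ) * hfun p‖ ≤ ε := by
      intro p hp
      have him : Rbig ≤ |p.im| := le_trans hp.1 (le_abs_self _)
      rw [habs_mul]
      exact mul_le_mul_of_nonneg_left (hfun_abs_le him) ha0
    obtain ⟨kA, kB, ρ, hρc, hρb, hρfix, hρan, hρuniq⟩ :=
      key_lemma (Jset Rbig) {p : ℂ | Rbig < p.im ∧ p.re ∈ Set.Ioo 0 1} hopen hsub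
        (Complex.I * (ω : ℂ)) hshiftS hshiftU (fun p => (α₀ : ℂ) * hfun p)
        hgcont hganal M ε hM hε0 hgbd hε1 hε2 hε3
    exact ⟨fun ρ hc hb => kA ρ hc hb, ⟨1/2, by norm_num, by norm_num,
      fun ρ₁ ρ₂ _ h1 _ h2 d hd p hp => kB ρ₁ ρ₂ h1 h2 d hd p hp⟩,
      ρ, hρc, hρb, hρfix, hρan,
      fun ρ' _ hb' hf' p hp => hρuniq ρ' hb' hf' p hp⟩
  · -- part (ii)
    have Mmap_eq : ∀ (Ω : ℂ → ℂ), Mmap α₀ ω Ω = fun p =>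
        -((α₀ : ℂ) * hfun (p - Complex.I * (ω : ℂ))) /
          (1 + -((α₀ : ℂ) * hfun (p - Complex.I * (ω : ℂ))) *
            Ω (p + -(Complex.I * (ω : ℂ)))) := by
      intro Ω
      funext p
      rw [show p + -(Complex.I * (ω : ℂ)) = p - Complex.I * (ω : ℂ) from
        (sub_eq_add_neg _ _).symm]
      unfold Mmap
      congr 1
      ring
    have hopen : IsOpen {p : ℂ | p.im < -Rbig ∧ p.re ∈ Set.Ioo 0 1} :=
      (isOpen_Iio.preimage Complex.continuous_im).inter
        ((isOpen_Ioo).preimage Complex.continuous_re)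
    have hsub : {p : ℂ | p.im < -Rbig ∧ p.re ∈ Set.Ioo 0 1} ⊆ Kset Rbig := by
      rintro p ⟨h1, h2, h3⟩
      exact ⟨h1.le, h2.le, h3.le⟩
    have hshiftS : ∀ p ∈ Kset Rbig, p + -(Complex.I * (ω : ℂ)) ∈ Kset Rbig := by
      rintro p ⟨h1, h2⟩
      constructor
      · simp only [Complex.add_im, Complex.neg_im, Complex.mul_im, Complex.I_re,
          Complex.I_im, Complex.ofReal_re, Complex.ofReal_im]
        nlinarith
      · simpa [Complex.add_re] using h2
    have hshiftU : ∀ p ∈ {p : ℂ | p.im < -Rbig ∧ p.re ∈ Set.Ioo 0 1},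
        p + -(Complex.I * (ω : ℂ)) ∈ {p : ℂ | p.im < -Rbig ∧ p.re ∈ Set.Ioo 0 1} := by
      rintro p ⟨h1, h2⟩
      constructor
      · simp only [Complex.add_im, Complex.neg_im, Complex.mul_im, Complex.I_re,
          Complex.I_im, Complex.ofReal_re, Complex.ofReal_im]
        nlinarith
      · simpa [Complex.add_re] using h2
    have himK : ∀ p ∈ Kset Rbig, Rbig ≤ |(p - Complex.I * (ω : ℂ)).im| := by
      intro p hp
      have h1 : (p - Complex.I * (ω : ℂ)).im = p.im - ω := by simp
      rw [h1]
      have := hp.1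
      calc Rbig ≤ -(p.im - ω) := by linarith
      _ ≤ |p.im - ω| := neg_le_abs _
    have hgcont : ContinuousOn
        (fun p => -((α₀ : ℂ) * hfun (p - Complex.I * (ω : ℂ)))) (Kset Rbig) := by
      intro p hp
      have hsc : ContinuousAt (fun q : ℂ => q - Complex.I * (ω : ℂ)) p :=
        (continuous_sub_right (Complex.I * (ω : ℂ))).continuousAt
      have h2 : ContinuousAt (hfun ∘ fun q : ℂ => q - Complex.I * (ω : ℂ)) p :=
        ContinuousAt.comp (hfun_analyticAt (himK p hp)).continuousAt hsc
      exact ((continuousAt_const.mul h2).neg).continuousWithinAt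
    have hganal : AnalyticOnNhd ℂ
        (fun p => -((α₀ : ℂ) * hfun (p - Complex.I * (ω : ℂ))))
        {p : ℂ | p.im < -Rbig ∧ p.re ∈ Set.Ioo 0 1} := by
      intro p hp
      have hsa : AnalyticAt ℂ (fun q : ℂ => q - Complex.I * (ω : ℂ)) p :=
        analyticAt_id.sub analyticAt_const
      have h2 : AnalyticAt ℂ (hfun ∘ fun q : ℂ => q - Complex.I * (ω : ℂ)) p :=
        AnalyticAt.comp (hfun_analyticAt (himK p (hsub hp))) hsa
      exact (analyticAt_const.mul h2).neg
    have hgbd : ∀ p ∈ Kset Rbig,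
        ‖-((α₀ : ℂ) * hfun (p - Complex.I * (ω : ℂ)))‖ ≤ ε := by
      intro p hp
      rw [norm_neg, habs_mul]
      exact mul_le_mul_of_nonneg_left (hfun_abs_le (himK p hp)) ha0
    obtain ⟨kA, kB, Ωf, hΩc, hΩb, hΩfix, hΩan, hΩuniq⟩ :=
      key_lemma (Kset Rbig) {p : ℂ | p.im < -Rbig ∧ p.re ∈ Set.Ioo 0 1} hopen hsub
        (-(Complex.I * (ω : ℂ))) hshiftS hshiftU
        (fun p => -((α₀ : ℂ) * hfun (p - Complex.I * (ω : ℂ))))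
        hgcont hganal M ε hM hε0 hgbd hε1 hε2 hε3
    refine ⟨?_, ⟨1/2, by norm_num, by norm_num, ?_⟩, Ωf, hΩc, hΩb, ?_, hΩan, ?_⟩
    · intro Ω hc hb
      rw [Mmap_eq Ω]
      exact kA Ω hc hb
    · intro Ω₁ Ω₂ _ h1 _ h2 d hd p hp
      rw [Mmap_eq Ω₁, Mmap_eq Ω₂]
      exact kB Ω₁ Ω₂ h1 h2 d hd p hp
    · intro p hp
      rw [Mmap_eq Ωf]
      exact hΩfix p hp
    · intro Ω' _ hb' hf' p hp
      refine hΩuniq Ω' hb' ?_ p hp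
      intro q hq
      have := hf' q hq
      rw [Mmap_eq Ω'] at this
      exact this
end
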